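/- arXiv:math/0508597 — 3 statements merged into one kernel-verified Lean document; each statement's English description precedes it below -/
import Mathlib

section
/- Let N ≥ 1, let n = (n_1,…,n_N) be a vector of positive integers, let q ≥ 1 be an integer, and let φ : ℕ → ℝ≥0 be nonincreasing. Then Σ over pairs of sites i, j ∈ I_n with ‖i − j‖ ≥ q of φ(‖i − j‖) is at most C_N · (Π_{k=1}^N n_k) · Σ_{t=q}^{‖n‖} t^{N−1} φ(t), where ‖·‖ is the Euclidean norm on ℤ^N, I_n = {i : 1 ≤ i_k ≤ n_k}, ‖n‖ = (n_1²+⋯+n_N²)^{1/2}, and C_N is a constant depending only on N. -/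
open Finset


/-- Real arithmetic core: two "large" coordinates in the same shell differ by < 2N+1. -/
private lemma gap_bound {N t : ℕ} (hN : 1 ≤ N) (ht : 1 ≤ t) {R x y : ℝ}
    (hR : 0 ≤ R)
    (hx : x ^ 2 + R < ((t : ℝ) + 1) ^ 2) (hy : (t : ℝ) ^ 2 ≤ y ^ 2 + R)
    (hNy : (t : ℝ) ^ 2 ≤ (N : ℝ) * y ^ 2)
    (hy0 : 0 < y) : x < y + 2 * N + 1 := by
  by_contra h
  push_neg at h
  have hN1 : (1 : ℝ) ≤ (N : ℝ) := by exact_mod_cast hN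
  have ht1 : (1 : ℝ) ≤ (t : ℝ) := by exact_mod_cast ht
  -- first: (2N+1) * y ≥ 2t
  have h4t : 2 * (t : ℝ) ≤ (2 * N + 1) * y := by
    have hsq : (2 * (t : ℝ)) ^ 2 ≤ ((2 * (N : ℝ) + 1) * y) ^ 2 := by
      nlinarith [hNy, sq_nonneg y, sq_nonneg ((N : ℝ) * y), mul_nonneg (mul_nonneg (by linarith : (0:ℝ) ≤ (N:ℝ)) (by linarith : (0:ℝ) ≤ (N:ℝ))) (sq_nonneg y)]
    have h2t : (0 : ℝ) ≤ 2 * t := by positivity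
    have h2Ny : (0 : ℝ) ≤ (2 * N + 1) * y := by positivity
    nlinarith [hsq, h2t, h2Ny]
  have hx2' : ((y : ℝ) + 2 * N + 1) ^ 2 ≤ x ^ 2 := by
    have h0 : (0 : ℝ) ≤ y + 2 * N + 1 := by positivity
    nlinarith [h, h0]
  nlinarith [hx2', h4t, hx, hy, ht1, hN1]

private lemma exists_argmax {N : ℕ} (hN : 1 ≤ N) (d : Fin N → ℤ) :
    ∃ k : Fin N, ∀ j, |d j| ≤ |d k| := by
  obtain ⟨k, -, hk⟩ := Finset.exists_max_image Finset.univ (fun k => |d k|)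
    ⟨⟨0, hN⟩, Finset.mem_univ _⟩
  exact ⟨k, fun j => hk j (Finset.mem_univ _)⟩

/-- Lattice shell count: integer points with `t ≤ ‖d‖ < t+1` number at most
`(4N+2) · N · (2t+3)^(N-1)`. -/
private lemma shell_card {N : ℕ} (hN : 1 ≤ N) (t : ℕ) (ht : 1 ≤ t)
    (D : Finset (Fin N → ℤ))
    (hD : ∀ d ∈ D, ((t : ℝ) ≤ Real.sqrt (∑ k, (d k : ℝ) ^ 2) ∧
      Real.sqrt (∑ k, (d k : ℝ) ^ 2) < t + 1)) :
    D.card ≤ (4 * N + 2) * (N * (2 * t + 3) ^ (N - 1)) := by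
  classical
  set k₀ : (Fin N → ℤ) → Fin N := fun d => (exists_argmax hN d).choose with hk₀def
  have hk₀ : ∀ (d : Fin N → ℤ) (j : Fin N), |d j| ≤ |d (k₀ d)| :=
    fun d => (exists_argmax hN d).choose_spec
  set f : (Fin N → ℤ) → (Fin N) × (Fin N → ℤ) :=
    fun d => (k₀ d, Function.update d (k₀ d) 0) with hfdef
  -- squared-norm bounds
  have hsq : ∀ d ∈ D, (t : ℝ) ^ 2 ≤ (∑ k, (d k : ℝ) ^ 2) ∧
      (∑ k, (d k : ℝ) ^ 2) < ((t : ℝ) + 1) ^ 2 := by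
    intro d hd
    obtain ⟨h1, h2⟩ := hD d hd
    have hnn : (0 : ℝ) ≤ ∑ k, (d k : ℝ) ^ 2 := Finset.sum_nonneg fun _ _ => sq_nonneg _
    constructor
    · nlinarith [Real.sq_sqrt hnn, Real.sqrt_nonneg (∑ k, (d k : ℝ) ^ 2)]
    · nlinarith [Real.sq_sqrt hnn, Real.sqrt_nonneg (∑ k, (d k : ℝ) ^ 2)]
  -- coordinate bounds
  have hcoord : ∀ d ∈ D, ∀ j, -((t : ℤ) + 1) ≤ d j ∧ d j ≤ (t : ℤ) + 1 := by
    intro d hd j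
    have h2 := (hsq d hd).2
    have hj : ((d j : ℝ)) ^ 2 ≤ ∑ k, (d k : ℝ) ^ 2 :=
      Finset.single_le_sum (f := fun k => ((d k : ℝ)) ^ 2) (fun _ _ => sq_nonneg _)
        (Finset.mem_univ j)
    have hub : ((d j : ℝ)) ≤ (t : ℝ) + 1 := by nlinarith [sq_nonneg ((d j : ℝ) + ((t : ℝ) + 1))]
    have hlb : -((t : ℝ) + 1) ≤ ((d j : ℝ)) := by nlinarith [sq_nonneg ((d j : ℝ) - ((t : ℝ) + 1))]
    constructor
    · exact_mod_cast hlb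
    · exact_mod_cast hub
  -- pigeonhole on f
  have hfiber : ∀ a ∈ D.image f, (D.filter fun d => f d = a).card ≤ 4 * N + 2 := by
    rintro ⟨k, e⟩ ha
    rcases (D.filter fun d => f d = (k, e)).eq_empty_or_nonempty with hFe | ⟨d₀, hd₀⟩
    · rw [hFe]; simp
    · set F := D.filter fun d => f d = (k, e) with hFdef
      have hmem : ∀ d ∈ F, k₀ d = k ∧ Function.update d (k₀ d) 0 = e := by
        intro d hd
        have h := (Finset.mem_filter.mp hd).2
        have h1 : k₀ d = k := congrArg Prod.fst h
        have h2 : Function.update d (k₀ d) 0 = e := congrArg Prod.snd h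
        exact ⟨h1, h2⟩
      have hek : e k = 0 := by
        obtain ⟨h1, h2⟩ := hmem d₀ hd₀
        have h3 := congrFun h2 k
        rw [h1, Function.update_self] at h3
        exact h3.symm
      have hdj : ∀ d ∈ F, ∀ j, j ≠ k → d j = e j := by
        intro d hd j hj
        obtain ⟨h1, h2⟩ := hmem d hd
        have h3 := congrFun h2 j
        rwa [h1, Function.update_of_ne hj] at h3
      set R : ℝ := ∑ j, (e j : ℝ) ^ 2 with hRdef
      have hRnn : 0 ≤ R := Finset.sum_nonneg fun _ _ => sq_nonneg _
      have hnorm : ∀ d ∈ F, (∑ j, (d j : ℝ) ^ 2) = ((d k : ℝ)) ^ 2 + R := by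
        intro d hd
        have h1 : R = ∑ j ∈ Finset.univ.erase k, (e j : ℝ) ^ 2 := by
          rw [hRdef, ← Finset.add_sum_erase Finset.univ _ (Finset.mem_univ k), hek]
          push_cast
          ring
        rw [← Finset.add_sum_erase Finset.univ (fun j => ((d j : ℝ)) ^ 2) (Finset.mem_univ k), h1]
        congr 1
        exact Finset.sum_congr rfl fun j hj => by
          rw [hdj d hd j (Finset.ne_of_mem_erase hj)]
      have hVfact : ∀ d ∈ F, (t : ℝ) ^ 2 ≤ ((d k : ℝ)) ^ 2 + R ∧
          ((d k : ℝ)) ^ 2 + R < ((t : ℝ) + 1) ^ 2 ∧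
          (t : ℝ) ^ 2 ≤ (N : ℝ) * ((d k : ℝ)) ^ 2 := by
        intro d hd
        have hdD : d ∈ F → d ∈ D := fun h => (Finset.mem_filter.mp h).1
        obtain ⟨hs1, hs2⟩ := hsq d (hdD hd)
        have hs1' := hs1
        rw [hnorm d hd] at hs1 hs2
        refine ⟨hs1, hs2, ?_⟩
        have hmax : ∀ j, ((d j : ℝ)) ^ 2 ≤ ((d k : ℝ)) ^ 2 := by
          intro j
          have h := hk₀ d j
          rw [(hmem d hd).1] at h
          have h' : |(d j : ℝ)| ≤ |(d k : ℝ)| := by exact_mod_cast h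
          calc ((d j : ℝ)) ^ 2 = |(d j : ℝ)| ^ 2 := (sq_abs _).symm
            _ ≤ |(d k : ℝ)| ^ 2 := pow_le_pow_left₀ (abs_nonneg _) h' 2
            _ = ((d k : ℝ)) ^ 2 := sq_abs _
        have hsum : (∑ j, ((d j : ℝ)) ^ 2) ≤ (N : ℝ) * ((d k : ℝ)) ^ 2 := by
          calc (∑ j, ((d j : ℝ)) ^ 2) ≤ ∑ _j : Fin N, ((d k : ℝ)) ^ 2 :=
              Finset.sum_le_sum fun j _ => hmax j
            _ = (N : ℝ) * ((d k : ℝ)) ^ 2 := by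
              rw [Finset.sum_const, Finset.card_univ, Fintype.card_fin, nsmul_eq_mul]
        linarith
      -- pass to the value set
      have hinj : Set.InjOn (fun d : Fin N → ℤ => d k) (F : Set (Fin N → ℤ)) := by
        intro d hd d' hd' hkk
        funext j
        by_cases hj : j = k
        · subst hj; exact hkk
        · rw [hdj d hd j hj, hdj d' hd' j hj]
      set V := F.image (fun d => d k) with hVdef
      have hcardF : F.card = V.card := (Finset.card_image_of_injOn hinj).symm
      have hVfact' : ∀ x ∈ V, (t : ℝ) ^ 2 ≤ ((x : ℝ)) ^ 2 + R ∧
          ((x : ℝ)) ^ 2 + R < ((t : ℝ) + 1) ^ 2 ∧ (t : ℝ) ^ 2 ≤ (N : ℝ) * ((x : ℝ)) ^ 2 := by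
        intro x hx
        obtain ⟨d, hd, rfl⟩ := Finset.mem_image.mp hx
        exact hVfact d hd
      have hxne : ∀ x ∈ V, x ≠ 0 := by
        intro x hx h0
        obtain ⟨-, -, h3⟩ := hVfact' x hx
        rw [h0] at h3
        have ht1 : (1 : ℝ) ≤ (t : ℝ) := by exact_mod_cast ht
        push_cast at h3
        nlinarith
      have hgap : ∀ x ∈ V, ∀ y ∈ V, 0 < x → 0 < y → x ≤ y + 2 * N := by
        intro x hx y hy hx0 hy0
        obtain ⟨-, hx2, -⟩ := hVfact' x hx
        obtain ⟨hy1, -, hy3⟩ := hVfact' y hy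
        have hlt := gap_bound hN ht hRnn hx2 hy1 hy3 (by exact_mod_cast hy0)
        have hzlt : x < y + 2 * N + 1 := by exact_mod_cast hlt
        omega
      have hgapneg : ∀ x ∈ V, ∀ y ∈ V, x < 0 → y < 0 → y - 2 * N ≤ x := by
        intro x hx y hy hx0 hy0
        obtain ⟨-, hx2, -⟩ := hVfact' x hx
        obtain ⟨hy1, -, hy3⟩ := hVfact' y hy
        have hx2' : (-(x : ℝ)) ^ 2 + R < ((t : ℝ) + 1) ^ 2 := by rwa [neg_sq]
        have hy1' : (t : ℝ) ^ 2 ≤ (-(y : ℝ)) ^ 2 + R := by rwa [neg_sq]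
        have hy3' : (t : ℝ) ^ 2 ≤ (N : ℝ) * (-(y : ℝ)) ^ 2 := by rwa [neg_sq]
        have hlt := gap_bound hN ht hRnn hx2' hy1' hy3'
          (by simp; exact_mod_cast hy0)
        have hzlt : -x < -y + 2 * N + 1 := by exact_mod_cast hlt
        omega
      have hposcard : (V.filter fun x => 0 < x).card ≤ 2 * N + 1 := by
        rcases (V.filter fun x => 0 < x).eq_empty_or_nonempty with he | hne
        · rw [he]; simp
        · have hmV := Finset.min'_mem _ hne
          have hsub : (V.filter fun x => 0 < x) ⊆
              Finset.Icc ((V.filter fun x => 0 < x).min' hne)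
                ((V.filter fun x => 0 < x).min' hne + 2 * N) := by
            intro x hx
            rw [Finset.mem_Icc]
            refine ⟨Finset.min'_le _ _ hx, ?_⟩
            have hxV := Finset.mem_filter.mp hx
            have hmV' := Finset.mem_filter.mp hmV
            exact hgap x hxV.1 _ hmV'.1 hxV.2 hmV'.2
          calc _ ≤ _ := Finset.card_le_card hsub
            _ ≤ 2 * N + 1 := by rw [Int.card_Icc]; omega
      have hnegcard : (V.filter fun x => x < 0).card ≤ 2 * N + 1 := by
        rcases (V.filter fun x => x < 0).eq_empty_or_nonempty with he | hne
        · rw [he]; simp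
        · have hmV := Finset.max'_mem _ hne
          have hsub : (V.filter fun x => x < 0) ⊆
              Finset.Icc ((V.filter fun x => x < 0).max' hne - 2 * N)
                ((V.filter fun x => x < 0).max' hne) := by
            intro x hx
            rw [Finset.mem_Icc]
            refine ⟨?_, Finset.le_max' _ _ hx⟩
            have hxV := Finset.mem_filter.mp hx
            have hmV' := Finset.mem_filter.mp hmV
            exact hgapneg x hxV.1 _ hmV'.1 hxV.2 hmV'.2
          calc _ ≤ _ := Finset.card_le_card hsub
            _ ≤ 2 * N + 1 := by rw [Int.card_Icc]; omega
      have hcover : V ⊆ (V.filter fun x => 0 < x) ∪ (V.filter fun x => x < 0) := by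
        intro x hx
        rcases lt_trichotomy x 0 with h | h | h
        · exact Finset.mem_union_right _ (Finset.mem_filter.mpr ⟨hx, h⟩)
        · exact absurd h (hxne x hx)
        · exact Finset.mem_union_left _ (Finset.mem_filter.mpr ⟨hx, h⟩)
      calc F.card = V.card := hcardF
        _ ≤ _ := Finset.card_le_card hcover
        _ ≤ _ := Finset.card_union_le _ _
        _ ≤ 4 * N + 2 := by omega
  have hmain := Finset.card_le_mul_card_image (f := f) D (4 * N + 2) hfiber
  -- bound the image cardinality
  have hEcard : ∀ k : Fin N,
      (Finset.Icc (Function.update (fun _ => -((t : ℤ) + 1)) k 0)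
        (Function.update (fun _ => ((t : ℤ) + 1)) k 0)).card = (2 * t + 3) ^ (N - 1) := by
    intro k
    rw [Pi.card_Icc]
    have hfac : ∀ j : Fin N,
        (Finset.Icc (Function.update (fun _ => -((t : ℤ) + 1)) k 0 j)
          (Function.update (fun _ => ((t : ℤ) + 1)) k 0 j)).card
        = if j = k then 1 else (2 * t + 3) := by
      intro j
      by_cases hj : j = k
      · subst hj; simp [Int.card_Icc]
      · rw [Function.update_of_ne hj, Function.update_of_ne hj, if_neg hj, Int.card_Icc]
        omega
    rw [Finset.prod_congr rfl fun j _ => hfac j,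
      ← Finset.mul_prod_erase Finset.univ _ (Finset.mem_univ k), if_pos rfl, one_mul,
      Finset.prod_congr rfl fun j hj => if_neg (Finset.ne_of_mem_erase hj),
      Finset.prod_const, Finset.card_erase_of_mem (Finset.mem_univ k), Finset.card_univ,
      Fintype.card_fin]
  have himg : D.image f ⊆ Finset.univ.biUnion (fun k =>
      {k} ×ˢ Finset.Icc (Function.update (fun _ => -((t : ℤ) + 1)) k 0)
        (Function.update (fun _ => ((t : ℤ) + 1)) k 0)) := by
    intro a ha
    obtain ⟨d, hd, rfl⟩ := Finset.mem_image.mp ha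
    refine Finset.mem_biUnion.mpr ⟨k₀ d, Finset.mem_univ _, ?_⟩
    refine Finset.mem_product.mpr ⟨Finset.mem_singleton_self _, ?_⟩
    simp only [Finset.mem_Icc, Pi.le_def]
    constructor <;> intro j <;> by_cases hj : j = k₀ d
    · subst hj; simp [hfdef]
    · simp only [hfdef, Function.update_of_ne hj]
      exact (hcoord d hd j).1
    · subst hj; simp [hfdef]
    · simp only [hfdef, Function.update_of_ne hj]
      exact (hcoord d hd j).2
  have himgcard : (D.image f).card ≤ N * (2 * t + 3) ^ (N - 1) := by
    calc (D.image f).card ≤ _ := Finset.card_le_card himg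
      _ ≤ ∑ k : Fin N, ({k} ×ˢ Finset.Icc (Function.update (fun _ => -((t : ℤ) + 1)) k 0)
          (Function.update (fun _ => ((t : ℤ) + 1)) k 0)).card := Finset.card_biUnion_le
      _ = ∑ k : Fin N, (2 * t + 3) ^ (N - 1) := by
          refine Finset.sum_congr rfl fun k _ => ?_
          rw [Finset.card_product, Finset.card_singleton, one_mul, hEcard k]
      _ = N * (2 * t + 3) ^ (N - 1) := by
          rw [Finset.sum_const, Finset.card_univ, Fintype.card_fin, smul_eq_mul]
  calc D.card ≤ (4 * N + 2) * (D.image f).card := hmain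
    _ ≤ (4 * N + 2) * (N * (2 * t + 3) ^ (N - 1)) := Nat.mul_le_mul_left _ himgcard

/-- Lattice-counting estimate: the sum of `φ(‖i-j‖)` over pairs of sites at distance
at least `q` is bounded by `C_N · n̂ · ∑_{t=q}^{‖n‖} t^{N-1} φ(t)`. -/
theorem stmt_6 (N : ℕ) (hN : 1 ≤ N) :
    ∃ C : ℝ, 0 < C ∧
      ∀ (n : Fin N → ℕ), (∀ k, 1 ≤ n k) →
      ∀ (q : ℕ), 1 ≤ q →
      ∀ (φ : ℝ → ℝ), (∀ t, 0 ≤ φ t) → (∀ s t : ℝ, 0 ≤ s → s ≤ t → φ t ≤ φ s) →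
        ∑ p ∈ ((Finset.Icc (1 : Fin N → ℕ) n) ×ˢ (Finset.Icc (1 : Fin N → ℕ) n)).filter
            (fun p => (q : ℝ) ≤ Real.sqrt (∑ k, ((p.1 k : ℝ) - (p.2 k : ℝ)) ^ 2)),
            φ (Real.sqrt (∑ k, ((p.1 k : ℝ) - (p.2 k : ℝ)) ^ 2)) ≤
          C * (∏ k, (n k : ℝ)) *
            ∑ t ∈ Finset.Icc q ⌈Real.sqrt (∑ k, (n k : ℝ) ^ 2)⌉₊,
              (t : ℝ) ^ (N - 1) * φ t := by
  classical
  have hCpos : 0 < ((4 * N + 2) * (N * 5 ^ (N - 1)) : ℕ) :=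
    Nat.mul_pos (by omega) (Nat.mul_pos (by omega) (by positivity))
  refine ⟨(((4 * N + 2) * (N * 5 ^ (N - 1)) : ℕ) : ℝ), by exact_mod_cast hCpos, ?_⟩
  intro n hn q hq φ hφ0 hmono
  set M := ⌈Real.sqrt (∑ k, (n k : ℝ) ^ 2)⌉₊ with hMdef
  set S := ((Finset.Icc (1 : Fin N → ℕ) n) ×ˢ (Finset.Icc (1 : Fin N → ℕ) n)).filter
      (fun p => (q : ℝ) ≤ Real.sqrt (∑ k, ((p.1 k : ℝ) - (p.2 k : ℝ)) ^ 2)) with hSdef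
  -- membership facts
  have hmemS : ∀ p ∈ S, (p.1 ∈ Finset.Icc (1 : Fin N → ℕ) n ∧
      p.2 ∈ Finset.Icc (1 : Fin N → ℕ) n) ∧
      (q : ℝ) ≤ Real.sqrt (∑ k, ((p.1 k : ℝ) - (p.2 k : ℝ)) ^ 2) := by
    intro p hp
    obtain ⟨h1, h2⟩ := Finset.mem_filter.mp hp
    exact ⟨Finset.mem_product.mp h1, h2⟩
  have hrle : ∀ p ∈ S, Real.sqrt (∑ k, ((p.1 k : ℝ) - (p.2 k : ℝ)) ^ 2) ≤
      Real.sqrt (∑ k, (n k : ℝ) ^ 2) := by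
    intro p hp
    apply Real.sqrt_le_sqrt
    apply Finset.sum_le_sum
    intro k _
    obtain ⟨⟨h1, h2⟩, -⟩ := hmemS p hp
    rw [Finset.mem_Icc] at h1 h2
    have ha1 : (1 : ℝ) ≤ (p.1 k : ℝ) := by exact_mod_cast h1.1 k
    have ha2 : (p.1 k : ℝ) ≤ (n k : ℝ) := by exact_mod_cast h1.2 k
    have hb1 : (1 : ℝ) ≤ (p.2 k : ℝ) := by exact_mod_cast h2.1 k
    have hb2 : (p.2 k : ℝ) ≤ (n k : ℝ) := by exact_mod_cast h2.2 k
    nlinarith [mul_nonneg (by linarith : (0:ℝ) ≤ (n k : ℝ) - (p.1 k : ℝ) + (p.2 k : ℝ))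
      (by linarith : (0:ℝ) ≤ (n k : ℝ) + (p.1 k : ℝ) - (p.2 k : ℝ))]
  have hmaps : ∀ p ∈ S,
      ⌊Real.sqrt (∑ k, ((p.1 k : ℝ) - (p.2 k : ℝ)) ^ 2)⌋₊ ∈ Finset.Icc q M := by
    intro p hp
    rw [Finset.mem_Icc]
    constructor
    · exact Nat.le_floor (hmemS p hp).2
    · exact le_trans (Nat.floor_le_floor (hrle p hp)) (Nat.floor_le_ceil _)
  -- the per-t cardinality bound
  have hcard : ∀ t ∈ Finset.Icc q M,
      (S.filter fun p => ⌊Real.sqrt (∑ k, ((p.1 k : ℝ) - (p.2 k : ℝ)) ^ 2)⌋₊ = t).card ≤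
        (∏ k, n k) * ((4 * N + 2) * (N * (2 * t + 3) ^ (N - 1))) := by
    intro t htmem
    rw [Finset.mem_Icc] at htmem
    have ht1 : 1 ≤ t := le_trans hq htmem.1
    set T := S.filter fun p => ⌊Real.sqrt (∑ k, ((p.1 k : ℝ) - (p.2 k : ℝ)) ^ 2)⌋₊ = t
      with hTdef
    set δ : (Fin N → ℕ) × (Fin N → ℕ) → (Fin N → ℤ) :=
      fun p k => (p.1 k : ℤ) - (p.2 k : ℤ) with hδdef
    have hfib : ∀ d ∈ T.image δ, (T.filter fun p => δ p = d).card ≤ ∏ k, n k := by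
      intro d _
      have hIccCard : (Finset.Icc (1 : Fin N → ℕ) n).card = ∏ k, n k := by
        rw [Pi.card_Icc]
        exact Finset.prod_congr rfl fun k _ => by simp
      rw [← hIccCard]
      apply Finset.card_le_card_of_injOn (f := Prod.snd)
      · intro p hp
        have hpT : p ∈ T := (Finset.mem_filter.mp hp).1
        have hpS : p ∈ S := (Finset.mem_filter.mp hpT).1
        exact (hmemS p hpS).1.2
      · intro p hp p' hp' hsnd
        have hd : δ p = δ p' := by
          rw [(Finset.mem_filter.mp hp).2, (Finset.mem_filter.mp hp').2]
        have hfst : p.1 = p'.1 := by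
          funext k
          have h1 := congrFun hd k
          simp only [hδdef] at h1
          have h2 : (p.2 : Fin N → ℕ) = p'.2 := hsnd
          have : (p.1 k : ℤ) = (p'.1 k : ℤ) := by
            rw [h2] at h1
            omega
          exact_mod_cast this
        exact Prod.ext hfst hsnd
    have hDprop : ∀ d ∈ T.image δ, ((t : ℝ) ≤ Real.sqrt (∑ k, (d k : ℝ) ^ 2) ∧
        Real.sqrt (∑ k, (d k : ℝ) ^ 2) < t + 1) := by
      intro d hd
      obtain ⟨p, hp, rfl⟩ := Finset.mem_image.mp hd
      have hpm := Finset.mem_filter.mp hp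
      have heq : (∑ k, ((δ p) k : ℝ) ^ 2) = ∑ k, ((p.1 k : ℝ) - (p.2 k : ℝ)) ^ 2 := by
        refine Finset.sum_congr rfl fun k _ => ?_
        simp only [hδdef]
        push_cast
        ring
      rw [heq]
      have hfl := hpm.2
      have hnn : 0 ≤ Real.sqrt (∑ k, ((p.1 k : ℝ) - (p.2 k : ℝ)) ^ 2) := Real.sqrt_nonneg _
      constructor
      · rw [← hfl]
        exact Nat.floor_le hnn
      · rw [← hfl]
        exact Nat.lt_floor_add_one _
    calc T.card ≤ (∏ k, n k) * (T.image δ).card :=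
        Finset.card_le_mul_card_image (f := δ) T _ hfib
      _ ≤ (∏ k, n k) * ((4 * N + 2) * (N * (2 * t + 3) ^ (N - 1))) :=
        Nat.mul_le_mul_left _ (shell_card hN t ht1 (T.image δ) hDprop)
  -- main chain
  calc ∑ p ∈ S, φ (Real.sqrt (∑ k, ((p.1 k : ℝ) - (p.2 k : ℝ)) ^ 2))
      ≤ ∑ p ∈ S, φ ((⌊Real.sqrt (∑ k, ((p.1 k : ℝ) - (p.2 k : ℝ)) ^ 2)⌋₊ : ℝ)) := by
        refine Finset.sum_le_sum fun p hp => ?_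
        exact hmono _ _ (by positivity) (Nat.floor_le (Real.sqrt_nonneg _))
    _ = ∑ t ∈ Finset.Icc q M, ∑ p ∈ S.filter
          (fun p => ⌊Real.sqrt (∑ k, ((p.1 k : ℝ) - (p.2 k : ℝ)) ^ 2)⌋₊ = t),
          φ ((⌊Real.sqrt (∑ k, ((p.1 k : ℝ) - (p.2 k : ℝ)) ^ 2)⌋₊ : ℝ)) :=
        (Finset.sum_fiberwise_of_maps_to hmaps _).symm
    _ = ∑ t ∈ Finset.Icc q M,
          ((S.filter (fun p => ⌊Real.sqrt (∑ k, ((p.1 k : ℝ) - (p.2 k : ℝ)) ^ 2)⌋₊ = t)).card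
            : ℝ) * φ t := by
        refine Finset.sum_congr rfl fun t _ => ?_
        rw [Finset.sum_congr rfl (fun p hp => by rw [(Finset.mem_filter.mp hp).2]),
          Finset.sum_const, nsmul_eq_mul]
    _ ≤ ∑ t ∈ Finset.Icc q M, (∏ k, (n k : ℝ)) *
          ((((4 * N + 2) * (N * 5 ^ (N - 1)) : ℕ) : ℝ) * ((t : ℝ) ^ (N - 1) * φ t)) := by
        refine Finset.sum_le_sum fun t htmem => ?_
        have ht1 : 1 ≤ t := le_trans hq (Finset.mem_Icc.mp htmem).1
        have ht1' : (1 : ℝ) ≤ (t : ℝ) := by exact_mod_cast ht1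
        have hc := hcard t htmem
        have hcast : ((S.filter (fun p =>
            ⌊Real.sqrt (∑ k, ((p.1 k : ℝ) - (p.2 k : ℝ)) ^ 2)⌋₊ = t)).card : ℝ) ≤
            (∏ k, (n k : ℝ)) * ((4 * N + 2) * ((N : ℝ) * (2 * (t : ℝ) + 3) ^ (N - 1))) := by
          exact_mod_cast hc
        have hpow : (2 * (t : ℝ) + 3) ^ (N - 1) ≤ 5 ^ (N - 1) * (t : ℝ) ^ (N - 1) := by
          rw [← mul_pow]
          exact pow_le_pow_left₀ (by positivity) (by linarith) _
        have key : (2 * (t : ℝ) + 3) ^ (N - 1) * φ t ≤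
            (5 ^ (N - 1) * (t : ℝ) ^ (N - 1)) * φ t :=
          mul_le_mul_of_nonneg_right hpow (hφ0 t)
        have h2 : (4 * (N : ℝ) + 2) * ((N : ℝ) * (2 * (t : ℝ) + 3) ^ (N - 1)) * φ t ≤
            (((4 * N + 2) * (N * 5 ^ (N - 1)) : ℕ) : ℝ) * ((t : ℝ) ^ (N - 1) * φ t) := by
          push_cast
          calc (4 * (N : ℝ) + 2) * ((N : ℝ) * (2 * (t : ℝ) + 3) ^ (N - 1)) * φ t
              = ((4 * (N : ℝ) + 2) * (N : ℝ)) * ((2 * (t : ℝ) + 3) ^ (N - 1) * φ t) := by ring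
            _ ≤ ((4 * (N : ℝ) + 2) * (N : ℝ)) * ((5 ^ (N - 1) * (t : ℝ) ^ (N - 1)) * φ t) :=
                mul_le_mul_of_nonneg_left key (by positivity)
            _ = (4 * (N : ℝ) + 2) * ((N : ℝ) * 5 ^ (N - 1)) * ((t : ℝ) ^ (N - 1) * φ t) := by
                ring
        have hprodnn : (0 : ℝ) ≤ ∏ k, (n k : ℝ) := Finset.prod_nonneg fun k _ => by positivity
        calc ((S.filter (fun p =>
              ⌊Real.sqrt (∑ k, ((p.1 k : ℝ) - (p.2 k : ℝ)) ^ 2)⌋₊ = t)).card : ℝ) * φ t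
            ≤ ((∏ k, (n k : ℝ)) * ((4 * N + 2) * ((N : ℝ) * (2 * (t : ℝ) + 3) ^ (N - 1)))) *
              φ t := mul_le_mul_of_nonneg_right hcast (hφ0 t)
          _ = (∏ k, (n k : ℝ)) *
              ((4 * (N : ℝ) + 2) * ((N : ℝ) * (2 * (t : ℝ) + 3) ^ (N - 1)) * φ t) := by
              push_cast; ring
          _ ≤ (∏ k, (n k : ℝ)) *
              ((((4 * N + 2) * (N * 5 ^ (N - 1)) : ℕ) : ℝ) * ((t : ℝ) ^ (N - 1) * φ t)) :=
              mul_le_mul_of_nonneg_left h2 hprodnn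
    _ = (((4 * N + 2) * (N * 5 ^ (N - 1)) : ℕ) : ℝ) * (∏ k, (n k : ℝ)) *
          ∑ t ∈ Finset.Icc q M, (t : ℝ) ^ (N - 1) * φ t := by
        rw [← Finset.mul_sum, ← Finset.mul_sum]
        ring
end

section
/- Let X, X' be ℝ^d-valued random vectors with bounded joint density f_{X,X'} and common marginal density f satisfying |f_{X,X'}(u,v) − f(u)f(v)| ≤ C_0 for all u, v. Let Z = h(X,Y), Z' = h(X',Y') be real random variables with |Z| ≤ L and |Z'| ≤ L almost surely, and let K_c : ℝ^d → ℝ be integrable and bounded. Then for any x ∈ ℝ^d and b > 0, b^{−d} |Cov( Z K_c((x−X)/b), Z' K_c((x−X')/b) )| ≤ C L² b^d, where C depends only on C_0, ∫|K_c| and the bound on f (through ∫ K_c((x−u)/b) f(u) du/b^d ≤ C₁). -/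
open MeasureTheory ENNReal

private lemma aux_ae_nonpos {α : Type*} [MeasurableSpace α] (μ : Measure α)
    {ρ : α → ℝ≥0∞} (hρ : Measurable ρ) {s : Set α} (hs : MeasurableSet s)
    (h0 : ∫⁻ a in s, ρ a ∂μ = 0) :
    ∀ᵐ a ∂μ, a ∈ s → ρ a = 0 :=
  (setLIntegral_eq_zero_iff hs hρ).mp h0

set_option maxHeartbeats 2000000 in
/-- Covariance bound (5.5) for truncated kernel-weighted variables:
`b^{-d} |Cov(Z K_c((x-X)/b), Z' K_c((x-X')/b))| ≤ C L² b^d`. -/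
theorem stmt_9 (d : ℕ) (hd : 0 < d) (C₀ C₁ KI : ℝ)
    (hC₀ : 0 ≤ C₀) (hC₁ : 0 ≤ C₁) (hKI : 0 ≤ KI) :
    ∃ C : ℝ, 0 < C ∧
      ∀ (Ω : Type) [m0 : MeasurableSpace Ω] (μ : Measure Ω),
        IsProbabilityMeasure μ →
      ∀ (X X' : Ω → (Fin d → ℝ)) (Y Y' : Ω → ℝ)
        (h : (Fin d → ℝ) → ℝ → ℝ) (f : (Fin d → ℝ) → ℝ)
        (fj : (Fin d → ℝ) → (Fin d → ℝ) → ℝ)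
        (Kc : (Fin d → ℝ) → ℝ) (x : Fin d → ℝ) (b L : ℝ), 0 < b → 0 < L →
        Measurable (fun ω => (X ω, X' ω, Y ω, Y' ω)) →
        Measurable f → Measurable (fun p : (Fin d → ℝ) × (Fin d → ℝ) => fj p.1 p.2) →
        -- joint density of `(X, X')` and common marginal density `f`
        μ.map (fun ω => (X ω, X' ω)) =
          (volume : Measure ((Fin d → ℝ) × (Fin d → ℝ))).withDensity
            (fun p => ENNReal.ofReal (fj p.1 p.2)) →
        μ.map X = (volume : Measure (Fin d → ℝ)).withDensity
            (fun u => ENNReal.ofReal (f u)) →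
        μ.map X' = (volume : Measure (Fin d → ℝ)).withDensity
            (fun u => ENNReal.ofReal (f u)) →
        (∀ u v, |fj u v - f u * f v| ≤ C₀) →
        -- `Z = h(X,Y)`, `Z' = h(X',Y')` bounded by `L`
        (∀ᵐ ω ∂μ, |h (X ω) (Y ω)| ≤ L) →
        (∀ᵐ ω ∂μ, |h (X' ω) (Y' ω)| ≤ L) →
        -- `K_c` integrable and bounded
        Integrable Kc (volume : Measure (Fin d → ℝ)) →
        (∫ u, |Kc u|) ≤ KI →
        (∃ B : ℝ, ∀ u, |Kc u| ≤ B) →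
        -- normalized kernel integral bound
        b ^ (-(d : ℝ)) * (∫ u, |Kc (fun k => (x k - u k) / b)| * f u) ≤ C₁ →
        b ^ (-(d : ℝ)) *
            |(∫ ω, (h (X ω) (Y ω) * Kc (fun k => (x k - X ω k) / b)) *
                  (h (X' ω) (Y' ω) * Kc (fun k => (x k - X' ω k) / b)) ∂μ) -
              (∫ ω, h (X ω) (Y ω) * Kc (fun k => (x k - X ω k) / b) ∂μ) *
                (∫ ω, h (X' ω) (Y' ω) * Kc (fun k => (x k - X' ω k) / b) ∂μ)| ≤
          C * L ^ 2 * b ^ (d : ℝ) := by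
  classical
  set A : ℝ := C₁ + Real.sqrt C₀ * KI with hA
  have hA0 : 0 ≤ A := by positivity
  refine ⟨2 * A ^ 2 + C₀ * KI ^ 2 + 1, by positivity, ?_⟩
  intro Ω m0 μ hμ X X' Y Y' h f fj Kc x b L hb hL hM hfm hfjm hJd hXd hX'd hC0
    hZb hZ'b hKint hKIb hKbdd hC1
  obtain ⟨B, hB⟩ := hKbdd
  have hB0 : 0 ≤ B := le_trans (abs_nonneg _) (hB 0)
  -- notation
  set ν : Measure (Fin d → ℝ) := volume with hν
  set Pi2 : Measure ((Fin d → ℝ) × (Fin d → ℝ)) := ν.prod ν with hPi2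
  have hvolprod : (volume : Measure ((Fin d → ℝ) × (Fin d → ℝ))) = Pi2 :=
    Measure.volume_eq_prod _ _
  -- measurability of the random vectors
  have hXm : Measurable X := measurable_fst.comp hM
  have hX'm : Measurable X' := measurable_fst.comp (measurable_snd.comp hM)
  have hXXm : Measurable (fun ω => (X ω, X' ω)) := hXm.prodMk hX'm
  -- the rescaled kernel
  set T : (Fin d → ℝ) → (Fin d → ℝ) := fun u k => (x k - u k) / b with hT
  have hTm : Measurable T :=
    measurable_pi_lambda _ fun k => ((measurable_const.sub (measurable_pi_apply k) : Measurable fun u : Fin d → ℝ => x k - u k)).div_const b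
  set g : (Fin d → ℝ) → ℝ := fun u => |Kc (T u)| with hg
  have hg0 : ∀ u, 0 ≤ g u := fun u => abs_nonneg _
  have hgB : ∀ u, g u ≤ B := fun u => hB _
  -- change of variables: the pushforward of `ν` under `T`
  have hmapT : ν.map T = ENNReal.ofReal (b ^ d) • ν := by
    have hTeq : T = (fun v : Fin d → ℝ => b⁻¹ • v) ∘ (fun u => x - u) := by
      funext u; funext k; simp [hT, div_eq_inv_mul]
    rw [hTeq, ← Measure.map_map (f := fun u : Fin d → ℝ => x - u) (measurable_const_smul b⁻¹)
      (measurable_const.sub measurable_id' : Measurable fun u : Fin d → ℝ => x - u), Measure.map_sub_left_eq_self volume x,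
      Measure.map_addHaar_smul volume (inv_ne_zero hb.ne')]
    congr 1
    rw [Module.finrank_fin_fun ℝ, abs_of_nonneg (by positivity), inv_pow, inv_inv]
  have hbd0 : (0:ℝ) < b ^ d := by positivity
  -- |Kc| integrable w.r.t. the pushforward
  have hKabs : Integrable (fun u => |Kc u|) (ν.map T) := by
    rw [hmapT]
    exact (hKint.abs).smul_measure ENNReal.ofReal_ne_top
  have hKabs_aesm : AEStronglyMeasurable (fun u => |Kc u|) (ν.map T) := hKabs.aestronglyMeasurable
  -- integrability and value of `∫ g`
  have hg_int : Integrable g ν := by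
    have := (integrable_map_measure hKabs_aesm hTm.aemeasurable).mp hKabs
    exact this
  have hg_val : ∫ u, g u ∂ν = b ^ d * ∫ u, |Kc u| := by
    have h1 : ∫ u, g u ∂ν = ∫ u, |Kc u| ∂(ν.map T) :=
      (integral_map hTm.aemeasurable hKabs_aesm).symm
    rw [h1, hmapT, integral_smul_measure, ENNReal.toReal_ofReal hbd0.le, smul_eq_mul]
  have hg_int_val : ∫ u, g u ∂ν ≤ b ^ d * KI := by
    rw [hg_val]; exact mul_le_mul_of_nonneg_left hKIb hbd0.le
  have hg_int_nonneg : 0 ≤ ∫ u, g u ∂ν := integral_nonneg hg0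
  have hg_aesm : AEStronglyMeasurable g ν := hg_int.aestronglyMeasurable
  -- a.e. facts about the joint density
  have hfjP : Measurable (fun p : (Fin d → ℝ) × (Fin d → ℝ) => ENNReal.ofReal (fj p.1 p.2)) :=
    hfjm.ennreal_ofReal
  have hN : MeasurableSet {u : Fin d → ℝ | f u < 0} := measurableSet_lt hfm measurable_const
  have hJP : μ.map (fun ω => (X ω, X' ω)) =
      Pi2.withDensity (fun p => ENNReal.ofReal (fj p.1 p.2)) := by
    rw [hJd, hvolprod]
  have hXdN : (μ.map X) {u | f u < 0} = 0 := by
    rw [hXd, withDensity_apply _ hN]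
    rw [setLIntegral_congr_fun hN (fun u hu =>
      ENNReal.ofReal_eq_zero.mpr (le_of_lt hu))]
    exact lintegral_zero
  have hX'dN : (μ.map X') {u | f u < 0} = 0 := by
    rw [hX'd, withDensity_apply _ hN]
    rw [setLIntegral_congr_fun hN (fun u hu =>
      ENNReal.ofReal_eq_zero.mpr (le_of_lt hu))]
    exact lintegral_zero
  have key1 : ∀ᵐ p ∂Pi2, f p.1 < 0 → fj p.1 p.2 ≤ 0 := by
    have hs : MeasurableSet ({u : Fin d → ℝ | f u < 0} ×ˢ (Set.univ : Set (Fin d → ℝ))) :=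
      hN.prod MeasurableSet.univ
    have h0 : ∫⁻ p in {u : Fin d → ℝ | f u < 0} ×ˢ Set.univ,
        ENNReal.ofReal (fj p.1 p.2) ∂Pi2 = 0 := by
      rw [← withDensity_apply _ hs, ← hJP, Measure.map_apply hXXm hs]
      have hpre : (fun ω => (X ω, X' ω)) ⁻¹' ({u | f u < 0} ×ˢ Set.univ)
          = X ⁻¹' {u | f u < 0} := by
        ext ω; simp
      rw [hpre, ← Measure.map_apply hXm hN]
      exact hXdN
    have := aux_ae_nonpos Pi2 hfjP hs h0
    filter_upwards [this] with p hp hneg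
    exact ENNReal.ofReal_eq_zero.mp (hp ⟨hneg, Set.mem_univ _⟩)
  have key2 : ∀ᵐ p ∂Pi2, f p.2 < 0 → fj p.1 p.2 ≤ 0 := by
    have hs : MeasurableSet ((Set.univ : Set (Fin d → ℝ)) ×ˢ {u : Fin d → ℝ | f u < 0}) :=
      MeasurableSet.univ.prod hN
    have h0 : ∫⁻ p in (Set.univ : Set (Fin d → ℝ)) ×ˢ {u : Fin d → ℝ | f u < 0},
        ENNReal.ofReal (fj p.1 p.2) ∂Pi2 = 0 := by
      rw [← withDensity_apply _ hs, ← hJP, Measure.map_apply hXXm hs]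
      have hpre : (fun ω => (X ω, X' ω)) ⁻¹' (Set.univ ×ˢ {u | f u < 0})
          = X' ⁻¹' {u | f u < 0} := by
        ext ω; simp
      rw [hpre, ← Measure.map_apply hX'm hN]
      exact hX'dN
    have := aux_ae_nonpos Pi2 hfjP hs h0
    filter_upwards [this] with p hp hneg
    exact ENNReal.ofReal_eq_zero.mp (hp ⟨Set.mem_univ _, hneg⟩)
  -- positive and negative parts of `f`
  set F : (Fin d → ℝ) → ℝ := fun u => max (f u) 0 with hF
  set fm : (Fin d → ℝ) → ℝ := fun u => max (-(f u)) 0 with hfmn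
  have hFm : Measurable F := hfm.max measurable_const
  have hfmm : Measurable fm := hfm.neg.max measurable_const
  have hF0 : ∀ u, 0 ≤ F u := fun u => le_max_right _ _
  have hfm0 : ∀ u, 0 ≤ fm u := fun u => le_max_right _ _
  have hFsplit : ∀ u, F u = f u + fm u := by
    intro u
    rcases le_total 0 (f u) with hu | hu
    · rw [hF, hfmn]; simp only [max_eq_left hu, max_eq_right (neg_nonpos.mpr hu), add_zero]
    · rw [hF, hfmn]; simp only [max_eq_right hu, max_eq_left (neg_nonneg.mpr hu)]; ring
  have keyF : ∀ᵐ p ∂Pi2, max (fj p.1 p.2) 0 ≤ F p.1 * F p.2 + C₀ := by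
    filter_upwards [key1, key2] with p h1 h2
    have hRHS : 0 ≤ F p.1 * F p.2 + C₀ :=
      add_nonneg (mul_nonneg (hF0 _) (hF0 _)) hC₀
    refine max_le ?_ hRHS
    rcases lt_or_ge (f p.1) 0 with hu | hu
    · exact le_trans (h1 hu) hRHS
    rcases lt_or_ge (f p.2) 0 with hv | hv
    · exact le_trans (h2 hv) hRHS
    have habs := (abs_le.mp (hC0 p.1 p.2)).2
    have hFu : F p.1 = f p.1 := max_eq_left hu
    have hFv : F p.2 = f p.2 := max_eq_left hv
    rw [hFu, hFv]; linarith
  have keyNN : ∀ᵐ p ∂Pi2, fm p.1 * fm p.2 ≤ C₀ := by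
    filter_upwards [key1] with p h1
    rcases lt_or_ge (f p.1) 0 with hu | hu
    swap
    · have hz : fm p.1 = 0 := max_eq_right (neg_nonpos.mpr hu)
      rw [hz, zero_mul]; exact hC₀
    rcases lt_or_ge (f p.2) 0 with hv | hv
    swap
    · have hz : fm p.2 = 0 := max_eq_right (neg_nonpos.mpr hv)
      rw [hz, mul_zero]; exact hC₀
    have hfj := h1 hu
    have habs := (abs_le.mp (hC0 p.1 p.2)).1
    have hfm1 : fm p.1 = -(f p.1) := max_eq_left (by linarith)
    have hfm2 : fm p.2 = -(f p.2) := max_eq_left (by linarith)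
    rw [hfm1, hfm2]; nlinarith
  -- lintegral of `ofReal ∘ g`
  have hLg : ∫⁻ u, ENNReal.ofReal (g u) ∂ν = ENNReal.ofReal (∫ u, g u ∂ν) :=
    (ofReal_integral_eq_lintegral_ofReal hg_int (Filter.Eventually.of_forall hg0)).symm
  -- the `g * fm` integral is small
  have hgfm_aesm : AEStronglyMeasurable (fun u => g u * fm u) ν :=
    hg_aesm.mul hfmm.aestronglyMeasurable
  have hgfm_aem : AEMeasurable (fun u => ENNReal.ofReal (g u * fm u)) ν :=
    (hg_aesm.aemeasurable.mul hfmm.aemeasurable).ennreal_ofReal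
  set GM : ℝ≥0∞ := ∫⁻ u, ENNReal.ofReal (g u * fm u) ∂ν with hGM
  have hGMsq : GM * GM ≤ ENNReal.ofReal C₀ *
      (ENNReal.ofReal (b ^ d * KI) * ENNReal.ofReal (b ^ d * KI)) := by
    rw [hGM, ← lintegral_prod_mul hgfm_aem hgfm_aem]
    have hle : ∀ᵐ p ∂Pi2, ENNReal.ofReal (g p.1 * fm p.1) * ENNReal.ofReal (g p.2 * fm p.2)
        ≤ ENNReal.ofReal C₀ * (ENNReal.ofReal (g p.1) * ENNReal.ofReal (g p.2)) := by
      filter_upwards [keyNN] with p hp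
      rw [ENNReal.ofReal_mul (hg0 _), ENNReal.ofReal_mul (hg0 _)]
      have h1 : ENNReal.ofReal (g p.1) * ENNReal.ofReal (fm p.1) *
          (ENNReal.ofReal (g p.2) * ENNReal.ofReal (fm p.2))
          = (ENNReal.ofReal (fm p.1) * ENNReal.ofReal (fm p.2)) *
            (ENNReal.ofReal (g p.1) * ENNReal.ofReal (g p.2)) := by ring
      rw [h1, ← ENNReal.ofReal_mul (hfm0 _)]
      exact mul_le_mul_left (ENNReal.ofReal_le_ofReal hp) _
    calc ∫⁻ p, ENNReal.ofReal (g p.1 * fm p.1) * ENNReal.ofReal (g p.2 * fm p.2) ∂Pi2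
        ≤ ∫⁻ p, ENNReal.ofReal C₀ * (ENNReal.ofReal (g p.1) * ENNReal.ofReal (g p.2)) ∂Pi2 :=
          lintegral_mono_ae hle
      _ = ENNReal.ofReal C₀ * ∫⁻ p, ENNReal.ofReal (g p.1) * ENNReal.ofReal (g p.2) ∂Pi2 :=
          lintegral_const_mul' _ _ ENNReal.ofReal_ne_top
      _ = ENNReal.ofReal C₀ * ((∫⁻ u, ENNReal.ofReal (g u) ∂ν) * ∫⁻ u, ENNReal.ofReal (g u) ∂ν) := by
          rw [lintegral_prod_mul hg_aesm.aemeasurable.ennreal_ofReal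
            hg_aesm.aemeasurable.ennreal_ofReal]
      _ ≤ ENNReal.ofReal C₀ * (ENNReal.ofReal (b ^ d * KI) * ENNReal.ofReal (b ^ d * KI)) := by
          rw [hLg]
          have : ENNReal.ofReal (∫ u, g u ∂ν) ≤ ENNReal.ofReal (b ^ d * KI) :=
            ENNReal.ofReal_le_ofReal hg_int_val
          exact mul_le_mul_right (mul_le_mul' this this) _
  have hCsq : ENNReal.ofReal C₀ * (ENNReal.ofReal (b ^ d * KI) * ENNReal.ofReal (b ^ d * KI))
      = ENNReal.ofReal (Real.sqrt C₀ * (b ^ d * KI)) *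
        ENNReal.ofReal (Real.sqrt C₀ * (b ^ d * KI)) := by
    have h1 : ENNReal.ofReal C₀ = ENNReal.ofReal (Real.sqrt C₀) * ENNReal.ofReal (Real.sqrt C₀) := by
      rw [← ENNReal.ofReal_mul (Real.sqrt_nonneg _), Real.mul_self_sqrt hC₀]
    rw [ENNReal.ofReal_mul (Real.sqrt_nonneg _), h1]
    ring
  have hGMle : GM ≤ ENNReal.ofReal (Real.sqrt C₀ * (b ^ d * KI)) := by
    by_contra hlt
    push_neg at hlt
    have h2 := ENNReal.mul_lt_mul hlt hlt
    rw [← hCsq] at h2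
    exact (lt_irrefl _ (lt_of_le_of_lt hGMsq h2)).elim
  have hGMfin : GM ≠ ⊤ := (lt_of_le_of_lt hGMle ENNReal.ofReal_lt_top).ne
  have hgfm_int : Integrable (fun u => g u * fm u) ν := by
    refine ⟨hgfm_aesm, ?_⟩
    rw [hasFiniteIntegral_iff_ofReal (Filter.Eventually.of_forall fun u =>
      mul_nonneg (hg0 u) (hfm0 u))]
    exact lt_of_le_of_lt hGMle ENNReal.ofReal_lt_top
  have hgfm_val : ∫ u, g u * fm u ∂ν ≤ Real.sqrt C₀ * (b ^ d * KI) := by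
    have h1 : ∫ u, g u * fm u ∂ν = GM.toReal := by
      rw [hGM, integral_eq_lintegral_of_nonneg_ae (Filter.Eventually.of_forall fun u =>
        mul_nonneg (hg0 u) (hfm0 u)) hgfm_aesm]
    rw [h1]
    calc GM.toReal ≤ (ENNReal.ofReal (Real.sqrt C₀ * (b ^ d * KI))).toReal :=
          ENNReal.toReal_mono ENNReal.ofReal_ne_top hGMle
      _ = Real.sqrt C₀ * (b ^ d * KI) :=
          ENNReal.toReal_ofReal (by positivity)
  -- integrability of `g` w.r.t. the law of `X` and transfer to the density
  have hXd' : μ.map X = ν.withDensity (fun u => ((f u).toNNReal : ℝ≥0∞)) := hXd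
  have hX'd' : μ.map X' = ν.withDensity (fun u => ((f u).toNNReal : ℝ≥0∞)) := hX'd
  have hac : μ.map X ≪ ν := by
    rw [hXd]; exact withDensity_absolutelyContinuous _ _
  have hgmapX_aesm : AEStronglyMeasurable g (μ.map X) := hg_aesm.mono_ac hac
  have hprobX : IsProbabilityMeasure (μ.map X) := Measure.isProbabilityMeasure_map hXm.aemeasurable
  have hg_int_mapX : Integrable g (μ.map X) :=
    ⟨hgmapX_aesm, HasFiniteIntegral.of_bounded (C := B) (Filter.Eventually.of_forall fun u => by
      rw [Real.norm_eq_abs, abs_of_nonneg (hg0 u)]; exact hgB u)⟩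
  have hgF_int : Integrable (fun u => F u * g u) ν := by
    have h2 := (integrable_withDensity_iff_integrable_smul
      (f := fun u => Real.toNNReal (f u)) hfm.real_toNNReal (g := g)).mp
      (by rw [← hXd']; exact hg_int_mapX)
    have h3 : (fun u => Real.toNNReal (f u) • g u) = fun u => F u * g u := by
      funext u; rw [NNReal.smul_def, Real.coe_toNNReal', smul_eq_mul]
    rwa [h3] at h2
  have hEgX : ∫ ω, g (X ω) ∂μ = ∫ u, F u * g u ∂ν := by
    have h1 := integral_map hXm.aemeasurable hgmapX_aesm
    rw [← h1, hXd', integral_withDensity_eq_integral_smul hfm.real_toNNReal g]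
    exact integral_congr_ae (Filter.Eventually.of_forall fun u => by
      simp [NNReal.smul_def, Real.coe_toNNReal', hF])
  have hEgX' : ∫ ω, g (X' ω) ∂μ = ∫ u, F u * g u ∂ν := by
    have hac' : μ.map X' ≪ ν := by
      rw [hX'd]; exact withDensity_absolutelyContinuous _ _
    have h1 := integral_map hX'm.aemeasurable (hg_aesm.mono_ac hac')
    rw [← h1, hX'd', integral_withDensity_eq_integral_smul hfm.real_toNNReal g]
    exact integral_congr_ae (Filter.Eventually.of_forall fun u => by
      simp [NNReal.smul_def, Real.coe_toNNReal', hF])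
  -- splitting `∫ g F` and the final bound on it
  have hgF_int' : Integrable (fun u => g u * F u) ν := by
    have : (fun u => g u * F u) = fun u => F u * g u := by funext u; ring
    rwa [this]
  have hgf_int : Integrable (fun u => g u * f u) ν := by
    have h2 : (fun u => g u * f u) = fun u => g u * F u - g u * fm u := by
      funext u; rw [hFsplit u]; ring
    rw [h2]; exact hgF_int'.sub hgfm_int
  have hsplit_val : ∫ u, F u * g u ∂ν = (∫ u, g u * f u ∂ν) + ∫ u, g u * fm u ∂ν := by
    rw [← integral_add hgf_int hgfm_int]
    congr 1; funext u; rw [hFsplit u]; ring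
  have hbrpow : b ^ (-(d:ℝ)) = (b ^ d)⁻¹ := by
    rw [Real.rpow_neg hb.le, Real.rpow_natCast]
  have hC1' : ∫ u, g u * f u ∂ν ≤ C₁ * b ^ d := by
    have h2 : (b ^ d)⁻¹ * (∫ u, g u * f u ∂ν) ≤ C₁ := by
      rw [← hbrpow]; exact hC1
    have h3 := mul_le_mul_of_nonneg_left h2 hbd0.le
    rw [← mul_assoc, mul_inv_cancel₀ hbd0.ne', one_mul] at h3
    linarith
  have hgF_bound : ∫ u, F u * g u ∂ν ≤ A * b ^ d := by
    rw [hsplit_val, hA]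
    have := hgfm_val
    nlinarith
  have hgF_nonneg : 0 ≤ ∫ u, F u * g u ∂ν :=
    integral_nonneg fun u => mul_nonneg (hF0 u) (hg0 u)
  -- integrability of the compositions with `X`, `X'`
  have hgX_aesm : AEStronglyMeasurable (fun ω => g (X ω)) μ :=
    hgmapX_aesm.comp_aemeasurable hXm.aemeasurable
  have hac' : μ.map X' ≪ ν := by
    rw [hX'd]; exact withDensity_absolutelyContinuous _ _
  have hgX'_aesm : AEStronglyMeasurable (fun ω => g (X' ω)) μ :=
    (hg_aesm.mono_ac hac').comp_aemeasurable hX'm.aemeasurable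
  have hgX_int : Integrable (fun ω => g (X ω)) μ :=
    ⟨hgX_aesm, HasFiniteIntegral.of_bounded (C := B) (Filter.Eventually.of_forall fun ω => by
      rw [Real.norm_eq_abs, abs_of_nonneg (hg0 _)]; exact hgB _)⟩
  have hgX'_int : Integrable (fun ω => g (X' ω)) μ :=
    ⟨hgX'_aesm, HasFiniteIntegral.of_bounded (C := B) (Filter.Eventually.of_forall fun ω => by
      rw [Real.norm_eq_abs, abs_of_nonneg (hg0 _)]; exact hgB _)⟩
  -- expectations of `g (X)` and `g (X')`
  have hEgX_le : ∫ ω, g (X ω) ∂μ ≤ A * b ^ d := by rw [hEgX]; exact hgF_bound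
  have hEgX'_le : ∫ ω, g (X' ω) ∂μ ≤ A * b ^ d := by rw [hEgX']; exact hgF_bound
  -- first moment bounds
  have hI1 : |∫ ω, h (X ω) (Y ω) * Kc (fun k => (x k - X ω k) / b) ∂μ| ≤ L * (A * b ^ d) := by
    rw [← Real.norm_eq_abs]
    refine le_trans (norm_integral_le_integral_norm _) ?_
    have hmono : ∫ ω, ‖h (X ω) (Y ω) * Kc (fun k => (x k - X ω k) / b)‖ ∂μ
        ≤ ∫ ω, L * g (X ω) ∂μ := by
      refine integral_mono_of_nonneg (Filter.Eventually.of_forall fun ω => norm_nonneg _)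
        (hgX_int.const_mul L) ?_
      filter_upwards [hZb] with ω h1
      rw [Real.norm_eq_abs, abs_mul]
      exact mul_le_mul_of_nonneg_right h1 (abs_nonneg _)
    refine le_trans hmono ?_
    rw [integral_const_mul]
    exact mul_le_mul_of_nonneg_left hEgX_le hL.le
  have hI1' : |∫ ω, h (X' ω) (Y' ω) * Kc (fun k => (x k - X' ω k) / b) ∂μ| ≤ L * (A * b ^ d) := by
    rw [← Real.norm_eq_abs]
    refine le_trans (norm_integral_le_integral_norm _) ?_
    have hmono : ∫ ω, ‖h (X' ω) (Y' ω) * Kc (fun k => (x k - X' ω k) / b)‖ ∂μ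
        ≤ ∫ ω, L * g (X' ω) ∂μ := by
      refine integral_mono_of_nonneg (Filter.Eventually.of_forall fun ω => norm_nonneg _)
        (hgX'_int.const_mul L) ?_
      filter_upwards [hZ'b] with ω h1
      rw [Real.norm_eq_abs, abs_mul]
      exact mul_le_mul_of_nonneg_right h1 (abs_nonneg _)
    refine le_trans hmono ?_
    rw [integral_const_mul]
    exact mul_le_mul_of_nonneg_left hEgX'_le hL.le
  -- second moment: transfer to the joint density
  have hJP' : μ.map (fun ω => (X ω, X' ω)) =
      Pi2.withDensity (fun p => ((fj p.1 p.2).toNNReal : ℝ≥0∞)) := hJP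
  have hacP : μ.map (fun ω => (X ω, X' ω)) ≪ Pi2 := by
    rw [hJP]; exact withDensity_absolutelyContinuous _ _
  have hgg_aesm_Pi2 : AEStronglyMeasurable
      (fun p : (Fin d → ℝ) × (Fin d → ℝ) => g p.1 * g p.2) Pi2 :=
    (hg_aesm.comp_quasiMeasurePreserving Measure.quasiMeasurePreserving_fst).mul
      (hg_aesm.comp_quasiMeasurePreserving Measure.quasiMeasurePreserving_snd)
  have hgg_aesm_map : AEStronglyMeasurable
      (fun p : (Fin d → ℝ) × (Fin d → ℝ) => g p.1 * g p.2)
      (μ.map (fun ω => (X ω, X' ω))) := hgg_aesm_Pi2.mono_ac hacP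
  have hggX_aesm : AEStronglyMeasurable (fun ω => g (X ω) * g (X' ω)) μ :=
    hgg_aesm_map.comp_aemeasurable hXXm.aemeasurable
  have hggX_int : Integrable (fun ω => g (X ω) * g (X' ω)) μ :=
    ⟨hggX_aesm, HasFiniteIntegral.of_bounded (C := B * B) (Filter.Eventually.of_forall fun ω => by
      rw [Real.norm_eq_abs, abs_of_nonneg (mul_nonneg (hg0 _) (hg0 _))]
      exact mul_le_mul (hgB _) (hgB _) (hg0 _) hB0)⟩
  have hJ2val : ∫ ω, g (X ω) * g (X' ω) ∂μ
      = ∫ p, ((fj p.1 p.2).toNNReal) • (g p.1 * g p.2) ∂Pi2 := by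
    calc ∫ ω, g (X ω) * g (X' ω) ∂μ
        = ∫ p, g p.1 * g p.2 ∂(μ.map (fun ω => (X ω, X' ω))) :=
          (integral_map hXXm.aemeasurable hgg_aesm_map).symm
      _ = ∫ p, ((fj p.1 p.2).toNNReal) • (g p.1 * g p.2) ∂Pi2 := by
          rw [hJP', integral_withDensity_eq_integral_smul hfjm.real_toNNReal]
  have hmaj1_int : Integrable
      (fun p : (Fin d → ℝ) × (Fin d → ℝ) => (F p.1 * g p.1) * (F p.2 * g p.2)) Pi2 :=
    hgF_int.mul_prod hgF_int
  have hmaj2_int : Integrable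
      (fun p : (Fin d → ℝ) × (Fin d → ℝ) => C₀ * (g p.1 * g p.2)) Pi2 :=
    (hg_int.mul_prod hg_int).const_mul C₀
  have hJ2bound : ∫ ω, g (X ω) * g (X' ω) ∂μ
      ≤ A * b ^ d * (A * b ^ d) + C₀ * ((b ^ d * KI) * (b ^ d * KI)) := by
    rw [hJ2val]
    have hstep : ∫ p, ((fj p.1 p.2).toNNReal) • (g p.1 * g p.2) ∂Pi2
        ≤ ∫ p, ((F p.1 * g p.1) * (F p.2 * g p.2) + C₀ * (g p.1 * g p.2)) ∂Pi2 := by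
      refine integral_mono_of_nonneg (Filter.Eventually.of_forall fun p => ?_)
        (hmaj1_int.add hmaj2_int) ?_
      · simp only [NNReal.smul_def, smul_eq_mul]
        exact mul_nonneg (NNReal.coe_nonneg _) (mul_nonneg (hg0 _) (hg0 _))
      · filter_upwards [keyF] with p hp
        simp only [NNReal.smul_def, smul_eq_mul, Real.coe_toNNReal']
        have hgg0 : 0 ≤ g p.1 * g p.2 := mul_nonneg (hg0 _) (hg0 _)
        have := mul_le_mul_of_nonneg_right hp hgg0
        calc max (fj p.1 p.2) 0 * (g p.1 * g p.2)
            ≤ (F p.1 * F p.2 + C₀) * (g p.1 * g p.2) := this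
          _ = (F p.1 * g p.1) * (F p.2 * g p.2) + C₀ * (g p.1 * g p.2) := by ring
    refine le_trans hstep ?_
    have e1 : ∫ p, ((F p.1 * g p.1) * (F p.2 * g p.2) + C₀ * (g p.1 * g p.2)) ∂Pi2
        = (∫ u, F u * g u ∂ν) * (∫ u, F u * g u ∂ν)
          + C₀ * ((∫ u, g u ∂ν) * (∫ u, g u ∂ν)) := by
      rw [integral_add hmaj1_int hmaj2_int, integral_const_mul]
      congr 1
      · exact integral_prod_mul (fun u => F u * g u) (fun u => F u * g u)
      · congr 1
        exact integral_prod_mul g g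
    rw [e1]
    have h1 : (∫ u, F u * g u ∂ν) * (∫ u, F u * g u ∂ν) ≤ A * b ^ d * (A * b ^ d) :=
      mul_le_mul hgF_bound hgF_bound hgF_nonneg (by positivity)
    have h2 : (∫ u, g u ∂ν) * (∫ u, g u ∂ν) ≤ (b ^ d * KI) * (b ^ d * KI) :=
      mul_le_mul hg_int_val hg_int_val hg_int_nonneg (by positivity)
    have h3 := mul_le_mul_of_nonneg_left h2 hC₀
    linarith
  -- second moment bound
  have hI2 : |∫ ω, (h (X ω) (Y ω) * Kc (fun k => (x k - X ω k) / b)) *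
        (h (X' ω) (Y' ω) * Kc (fun k => (x k - X' ω k) / b)) ∂μ|
      ≤ L ^ 2 * (A * b ^ d * (A * b ^ d) + C₀ * ((b ^ d * KI) * (b ^ d * KI))) := by
    rw [← Real.norm_eq_abs]
    refine le_trans (norm_integral_le_integral_norm _) ?_
    have hmono : ∫ ω, ‖(h (X ω) (Y ω) * Kc (fun k => (x k - X ω k) / b)) *
          (h (X' ω) (Y' ω) * Kc (fun k => (x k - X' ω k) / b))‖ ∂μ
        ≤ ∫ ω, L ^ 2 * (g (X ω) * g (X' ω)) ∂μ := by
      refine integral_mono_of_nonneg (Filter.Eventually.of_forall fun ω => norm_nonneg _)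
        (hggX_int.const_mul _) ?_
      filter_upwards [hZb, hZ'b] with ω h1 h2
      rw [Real.norm_eq_abs, abs_mul, abs_mul, abs_mul]
      have e1 : |h (X ω) (Y ω)| * |Kc (fun k => (x k - X ω k) / b)| ≤ L * g (X ω) :=
        mul_le_mul_of_nonneg_right h1 (abs_nonneg _)
      have e2 : |h (X' ω) (Y' ω)| * |Kc (fun k => (x k - X' ω k) / b)| ≤ L * g (X' ω) :=
        mul_le_mul_of_nonneg_right h2 (abs_nonneg _)
      calc |h (X ω) (Y ω)| * |Kc (fun k => (x k - X ω k) / b)| *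
            (|h (X' ω) (Y' ω)| * |Kc (fun k => (x k - X' ω k) / b)|)
          ≤ (L * g (X ω)) * (L * g (X' ω)) :=
            mul_le_mul e1 e2 (mul_nonneg (abs_nonneg _) (abs_nonneg _))
              (mul_nonneg hL.le (hg0 _))
        _ = L ^ 2 * (g (X ω) * g (X' ω)) := by ring
    refine le_trans hmono ?_
    rw [integral_const_mul]
    exact mul_le_mul_of_nonneg_left hJ2bound (by positivity)
  -- final assembly
  rw [hbrpow, Real.rpow_natCast]
  have habs : |(∫ ω, (h (X ω) (Y ω) * Kc (fun k => (x k - X ω k) / b)) *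
        (h (X' ω) (Y' ω) * Kc (fun k => (x k - X' ω k) / b)) ∂μ) -
      (∫ ω, h (X ω) (Y ω) * Kc (fun k => (x k - X ω k) / b) ∂μ) *
        (∫ ω, h (X' ω) (Y' ω) * Kc (fun k => (x k - X' ω k) / b) ∂μ)|
      ≤ L ^ 2 * ((2 * A ^ 2 + C₀ * KI ^ 2) * (b ^ d * b ^ d)) := by
    refine le_trans (abs_sub _ _) ?_
    rw [abs_mul]
    have h4 : |(∫ ω, h (X ω) (Y ω) * Kc (fun k => (x k - X ω k) / b) ∂μ)| *
        |(∫ ω, h (X' ω) (Y' ω) * Kc (fun k => (x k - X' ω k) / b) ∂μ)|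
        ≤ (L * (A * b ^ d)) * (L * (A * b ^ d)) :=
      mul_le_mul hI1 hI1' (abs_nonneg _) (by positivity)
    have h5 := hI2
    have hring : L ^ 2 * ((2 * A ^ 2 + C₀ * KI ^ 2) * (b ^ d * b ^ d))
        = L ^ 2 * (A * b ^ d * (A * b ^ d) + C₀ * ((b ^ d * KI) * (b ^ d * KI)))
          + (L * (A * b ^ d)) * (L * (A * b ^ d)) := by ring
    linarith
  calc (b ^ d)⁻¹ * |(∫ ω, (h (X ω) (Y ω) * Kc (fun k => (x k - X ω k) / b)) *
        (h (X' ω) (Y' ω) * Kc (fun k => (x k - X' ω k) / b)) ∂μ) -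
      (∫ ω, h (X ω) (Y ω) * Kc (fun k => (x k - X ω k) / b) ∂μ) *
        (∫ ω, h (X' ω) (Y' ω) * Kc (fun k => (x k - X' ω k) / b) ∂μ)|
      ≤ (b ^ d)⁻¹ * (L ^ 2 * ((2 * A ^ 2 + C₀ * KI ^ 2) * (b ^ d * b ^ d))) :=
        mul_le_mul_of_nonneg_left habs (by positivity)
    _ = (2 * A ^ 2 + C₀ * KI ^ 2) * L ^ 2 * b ^ d := by
        field_simp
    _ ≤ (2 * A ^ 2 + C₀ * KI ^ 2 + 1) * L ^ 2 * b ^ d := by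
        have hpos : (0:ℝ) < L ^ 2 * b ^ d := by positivity
        nlinarith [hpos]
end

section
/- Let r, s, h ∈ [1, ∞) with 1/r + 1/s + 1/h = 1, and let X ∈ L^r, Y ∈ L^s be real random variables measurable with respect to σ-fields 𝒜 and ℬ respectively. Then |E[XY] − E[X]E[Y]| ≤ C ‖X‖_r ‖Y‖_s α(𝒜, ℬ)^{1/h}, where α(𝒜,ℬ) is the strong mixing coefficient and C is a universal constant (one may take C = 10). -/
open MeasureTheory

noncomputable def dav_G (c t : ℝ) : ℝ :=
  (Set.Ioi t).indicator 1 c - (Set.Iio (-t)).indicator 1 c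

theorem dav_G_eq (c t : ℝ) :
    dav_G c t = (Set.Iio c).indicator 1 t - (Set.Iio (-c)).indicator 1 t := by
  simp only [dav_G, Set.indicator_apply, Set.mem_Ioi, Set.mem_Iio, Pi.one_apply]
  have h2 : c < -t ↔ t < -c := by constructor <;> intro h <;> linarith
  rw [if_congr h2 rfl rfl]

theorem dav_G_abs (c t : ℝ) : |dav_G c t| ≤ 1 := by
  rw [dav_G]
  rcases Set.indicator_eq_zero_or_self (Set.Ioi t) (1 : ℝ → ℝ) c with h1 | h1 <;>
    rcases Set.indicator_eq_zero_or_self (Set.Iio (-t)) (1 : ℝ → ℝ) c with h2 | h2 <;>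
      rw [h1, h2] <;> norm_num

theorem dav_layer {M c : ℝ} (h : |c| ≤ M) :
    ∫ t in Set.Ioo (0:ℝ) M, dav_G c t = c := by
  have habs := abs_le.mp h
  have hfin : volume (Set.Ioo (0:ℝ) M) ≠ ⊤ := by
    rw [Real.volume_Ioo]; exact ENNReal.ofReal_ne_top
  haveI : IsFiniteMeasure (volume.restrict (Set.Ioo (0:ℝ) M)) :=
    ⟨by rwa [Measure.restrict_apply_univ, lt_top_iff_ne_top]⟩
  have hint : ∀ a : ℝ, Integrable ((Set.Iio a).indicator (1 : ℝ → ℝ))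
      (volume.restrict (Set.Ioo (0:ℝ) M)) :=
    fun a => (integrable_const (1:ℝ)).indicator measurableSet_Iio
  have hcalc : ∀ a : ℝ, ∫ t in Set.Ioo (0:ℝ) M, (Set.Iio a).indicator (1 : ℝ → ℝ) t
      = (volume (Set.Iio a ∩ Set.Ioo 0 M)).toReal := by
    intro a
    have := integral_indicator_const (μ := volume.restrict (Set.Ioo (0:ℝ) M)) (1 : ℝ)
      (measurableSet_Iio (a := a))
    rw [measureReal_def, Measure.restrict_apply measurableSet_Iio] at this
    simpa using this
  have hsplit : ∫ t in Set.Ioo (0:ℝ) M, dav_G c t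
      = (∫ t in Set.Ioo (0:ℝ) M, (Set.Iio c).indicator (1 : ℝ → ℝ) t)
        - ∫ t in Set.Ioo (0:ℝ) M, (Set.Iio (-c)).indicator (1 : ℝ → ℝ) t := by
    rw [← integral_sub (hint c) (hint (-c))]
    exact integral_congr_ae (Filter.Eventually.of_forall fun t => dav_G_eq c t)
  rw [hsplit, hcalc, hcalc]
  rcases le_or_gt 0 c with hc | hc
  · have e1 : Set.Iio c ∩ Set.Ioo 0 M = Set.Ioo 0 c := by
      ext t; simp only [Set.mem_inter_iff, Set.mem_Iio, Set.mem_Ioo]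
      constructor
      · rintro ⟨h1, h2, _⟩; exact ⟨h2, h1⟩
      · rintro ⟨h1, h2⟩; exact ⟨h2, h1, lt_of_lt_of_le h2 habs.2⟩
    have e2 : Set.Iio (-c) ∩ Set.Ioo 0 M = ∅ := by
      ext t; simp only [Set.mem_inter_iff, Set.mem_Iio, Set.mem_Ioo, Set.mem_empty_iff_false,
        iff_false, not_and]
      intro h1 h2; linarith
    rw [e1, e2, Real.volume_Ioo, measure_empty, ENNReal.toReal_zero,
      ENNReal.toReal_ofReal (by linarith)]
    ring
  · have e1 : Set.Iio c ∩ Set.Ioo 0 M = ∅ := by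
      ext t; simp only [Set.mem_inter_iff, Set.mem_Iio, Set.mem_Ioo, Set.mem_empty_iff_false,
        iff_false, not_and]
      intro h1 h2; linarith
    have e2 : Set.Iio (-c) ∩ Set.Ioo 0 M = Set.Ioo 0 (-c) := by
      ext t; simp only [Set.mem_inter_iff, Set.mem_Iio, Set.mem_Ioo]
      constructor
      · rintro ⟨h1, h2, _⟩; exact ⟨h2, h1⟩
      · rintro ⟨h1, h2⟩
        refine ⟨h2, h1, lt_of_lt_of_le h2 ?_⟩
        have := habs.1; linarith
    rw [e1, e2, Real.volume_Ioo, measure_empty, ENNReal.toReal_zero,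
      ENNReal.toReal_ofReal (by linarith)]
    ring
theorem dav_G_meas {δ : Type*} [MeasurableSpace δ] {f g : δ → ℝ}
    (hf : Measurable f) (hg : Measurable g) :
    Measurable fun d => dav_G (f d) (g d) := by
  have h1 : Measurable fun d => (Set.Ioi (g d)).indicator (1 : ℝ → ℝ) (f d) := by
    have he : ∀ d, (Set.Ioi (g d)).indicator (1 : ℝ → ℝ) (f d)
        = if g d < f d then 1 else 0 := by
      intro d; simp [Set.indicator_apply]
    simp only [he]
    exact Measurable.ite (measurableSet_lt hg hf) measurable_const measurable_const
  have h2 : Measurable fun d => (Set.Iio (-(g d))).indicator (1 : ℝ → ℝ) (f d) := by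
    have he : ∀ d, (Set.Iio (-(g d))).indicator (1 : ℝ → ℝ) (f d)
        = if f d < -(g d) then 1 else 0 := by
      intro d; simp [Set.indicator_apply]
    simp only [he]
    exact Measurable.ite (measurableSet_lt hf hg.neg) measurable_const measurable_const
  exact h1.sub h2

theorem dav_finrestrict (M : ℝ) : IsFiniteMeasure (volume.restrict (Set.Ioo (0:ℝ) M)) := by
  refine ⟨?_⟩
  rw [Measure.restrict_apply_univ, Real.volume_Ioo]
  exact ENNReal.ofReal_lt_top

noncomputable def dav_clip (c M : ℝ) : ℝ := max (min c M) (-M)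

theorem dav_clip_abs {M : ℝ} (hM : 0 ≤ M) (c : ℝ) : |dav_clip c M| ≤ M := by
  rw [dav_clip, abs_le]
  constructor
  · exact le_max_right _ _
  · exact max_le (min_le_right _ _) (by linarith)

theorem dav_clip_eq {M c : ℝ} (h : |c| ≤ M) : dav_clip c M = c := by
  rw [abs_le] at h
  rw [dav_clip, min_eq_left h.2, max_eq_left h.1]

theorem dav_clip_sub_abs {M : ℝ} (hM : 0 ≤ M) (c : ℝ) : |c - dav_clip c M| ≤ |c| := by
  rcases le_or_gt c (-M) with h1 | h1
  · have : dav_clip c M = -M := by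
      rw [dav_clip, max_eq_right]
      exact le_trans (min_le_left _ _) h1
    rw [this]
    rw [abs_le]
    constructor
    · have : -|c| ≤ c := neg_abs_le c
      linarith [neg_le_abs c, abs_nonneg c]
    · have : c ≤ -M := h1
      have hc : c ≤ 0 := by linarith
      rw [abs_of_nonpos hc]; linarith
  rcases le_or_gt M c with h2 | h2
  · have : dav_clip c M = M := by
      rw [dav_clip, min_eq_right h2, max_eq_left (by linarith)]
    rw [this]
    have hc : 0 ≤ c := le_trans hM h2
    rw [abs_of_nonneg (by linarith : (0:ℝ) ≤ c - M), abs_of_nonneg hc]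
    linarith
  · rw [dav_clip_eq (abs_le.mpr ⟨le_of_lt h1, le_of_lt h2⟩)]
    simp [abs_nonneg]

theorem dav_clip_sub_ne {M c : ℝ} (h : |c| ≤ M) : c - dav_clip c M = 0 := by
  rw [dav_clip_eq h]; ring

/-- tail bound : `|c - clip c M| ≤ |c|^r M^{1-r}` -/
theorem dav_tail_bound {M r : ℝ} (hM : 0 < M) (hr : 1 ≤ r) (c : ℝ) :
    |c - dav_clip c M| ≤ |c| ^ r * M ^ (1 - r) := by
  rcases le_or_gt |c| M with h | h
  · rw [dav_clip_sub_ne h, abs_zero]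
    positivity
  · have hc : 0 < |c| := lt_trans hM h
    calc |c - dav_clip c M| ≤ |c| := dav_clip_sub_abs hM.le c
    _ = |c| ^ (1:ℝ) * 1 := by rw [Real.rpow_one, mul_one]
    _ ≤ |c| ^ (1:ℝ) * (|c| ^ (r-1) * M ^ (1-r)) := by
        refine mul_le_mul_of_nonneg_left ?_ (by positivity)
        rw [show (1:ℝ) - r = -(r-1) by ring, Real.rpow_neg hM.le, ← div_eq_mul_inv,
          le_div_iff₀ (by positivity), one_mul]
        exact Real.rpow_le_rpow hM.le h.le (by linarith)
    _ = |c| ^ r * M ^ (1 - r) := by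
        rw [← mul_assoc, ← Real.rpow_add hc]
        ring_nf

/-- Young-type product tail bound. -/
theorem dav_tail_prod {M N r r' s : ℝ} (hM : 0 < M) (hN : 0 < N)
    (hconj : r.HolderConjugate r') (hr's : r' ≤ s) (c d : ℝ) :
    |c - dav_clip c M| * |d - dav_clip d N|
      ≤ M * N * ((|c| / M) ^ r + (|d| / N) ^ s) := by
  have hrhs : (0:ℝ) ≤ M * N * ((|c| / M) ^ r + (|d| / N) ^ s) := by positivity
  rcases le_or_gt |c| M with h1 | h1
  · rw [dav_clip_sub_ne h1, abs_zero, zero_mul]; exact hrhs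
  rcases le_or_gt |d| N with h2 | h2
  · rw [dav_clip_sub_ne h2, abs_zero, mul_zero]; exact hrhs
  have h3 : |c - dav_clip c M| * |d - dav_clip d N| ≤ |c| * |d| :=
    mul_le_mul (dav_clip_sub_abs hM.le c) (dav_clip_sub_abs hN.le d) (abs_nonneg _) (abs_nonneg _)
  have h4 : |c| * |d| = M * N * ((|c| / M) * (|d| / N)) := by
    field_simp
  have h5 : (|c| / M) * (|d| / N) ≤ (|c| / M) ^ r + (|d| / N) ^ s := by
    have hy := Real.young_inequality_of_nonneg
      (by positivity : (0:ℝ) ≤ |c| / M) (by positivity : (0:ℝ) ≤ |d| / N) hconj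
    have h6 : (|c| / M) ^ r / r ≤ (|c| / M) ^ r := by
      apply div_le_self (by positivity) (le_of_lt hconj.lt)
    have h7 : (|d| / N) ^ r' / r' ≤ (|d| / N) ^ s := by
      have h8 : (|d| / N) ^ r' ≤ (|d| / N) ^ s := by
        apply Real.rpow_le_rpow_of_exponent_le _ hr's
        rw [le_div_iff₀ hN]; linarith
      calc (|d| / N) ^ r' / r' ≤ (|d| / N) ^ r' :=
        div_le_self (by positivity) (le_of_lt hconj.symm.lt)
      _ ≤ _ := h8
    linarith
  calc |c - dav_clip c M| * |d - dav_clip d N| ≤ |c| * |d| := h3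
  _ = M * N * ((|c| / M) * (|d| / N)) := h4
  _ ≤ M * N * ((|c| / M) ^ r + (|d| / N) ^ s) :=
      mul_le_mul_of_nonneg_left h5 (by positivity)

theorem dav_abs_le_rpow {r : ℝ} (hr : 1 ≤ r) (c : ℝ) : |c| ≤ |c| ^ r + 1 := by
  rcases le_or_gt |c| 1 with h | h
  · have : (0:ℝ) ≤ |c| ^ r := Real.rpow_nonneg (abs_nonneg _) r
    linarith
  · have : |c| = |c| ^ (1:ℝ) := (Real.rpow_one _).symm
    have h2 : |c| ^ (1:ℝ) ≤ |c| ^ r := Real.rpow_le_rpow_of_exponent_le h.le hr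
    have : (0:ℝ) ≤ (1:ℝ) := zero_le_one
    rw [Real.rpow_one] at h2
    linarith

theorem dav_rpow_le_rpow_add_one {r' s : ℝ} (hr' : 0 ≤ r') (hr's : r' ≤ s) (c : ℝ) :
    |c| ^ r' ≤ |c| ^ s + 1 := by
  rcases le_or_gt |c| 1 with h | h
  · have : |c| ^ r' ≤ 1 := Real.rpow_le_one (abs_nonneg _) h hr'
    have : (0:ℝ) ≤ |c| ^ s := Real.rpow_nonneg (abs_nonneg _) s
    linarith [Real.rpow_le_one (abs_nonneg _) h hr']
  · have h2 : |c| ^ r' ≤ |c| ^ s := Real.rpow_le_rpow_of_exponent_le h.le hr's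
    linarith

theorem dav_mul_abs_le {r r' s : ℝ} (hconj : r.HolderConjugate r') (hr's : r' ≤ s) (c d : ℝ) :
    |c * d| ≤ |c| ^ r + |d| ^ s + 1 := by
  have hy := Real.young_inequality_of_nonneg (abs_nonneg c) (abs_nonneg d) hconj
  have h6 : |c| ^ r / r ≤ |c| ^ r := div_le_self (by positivity) (le_of_lt hconj.lt)
  have h7 : |d| ^ r' / r' ≤ |d| ^ r' := div_le_self (by positivity) (le_of_lt hconj.symm.lt)
  have h8 := dav_rpow_le_rpow_add_one (le_of_lt hconj.symm.pos) hr's d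
  rw [abs_mul]
  linarith

section DavMean
variable {Ω : Type} [m0 : MeasurableSpace Ω] {μ : Measure Ω}

/-- on a probability space, `E|f| ≤ (E|f|^s)^(1/s)` -/
theorem dav_young_mean [IsProbabilityMeasure μ] {s s' : ℝ} (hss : s.HolderConjugate s')
    {f : Ω → ℝ} (hfm : AEStronglyMeasurable f μ)
    (hfs : Integrable (fun ω => |f ω| ^ s) μ) :
    ∫ ω, |f ω| ∂μ ≤ (∫ ω, |f ω| ^ s ∂μ) ^ (1 / s) := by
  have hs0 : (0:ℝ) < s := hss.pos
  have hs'0 : (0:ℝ) < s' := hss.symm.pos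
  have habsm : AEStronglyMeasurable (fun ω => |f ω|) μ := by
    have := hfm.norm
    simpa [Real.norm_eq_abs] using this
  have hA0 : 0 ≤ ∫ ω, |f ω| ^ s ∂μ :=
    integral_nonneg fun ω => Real.rpow_nonneg (abs_nonneg _) s
  rcases eq_or_lt_of_le hA0 with hA | hA
  · -- integral of |f|^s is zero, so f = 0 a.e.
    have hz : (fun ω => |f ω| ^ s) =ᵐ[μ] 0 :=
      (integral_eq_zero_iff_of_nonneg_ae
        (Filter.Eventually.of_forall fun ω => Real.rpow_nonneg (abs_nonneg _) s) hfs).mp hA.symm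
    have hz2 : (fun ω => |f ω|) =ᵐ[μ] 0 := by
      filter_upwards [hz] with ω hω
      have : |f ω| ^ s = 0 := hω
      have := (Real.rpow_eq_zero_iff_of_nonneg (abs_nonneg (f ω))).mp this
      simpa using this.1
    rw [integral_eq_zero_of_ae hz2, ← hA, Real.zero_rpow (by positivity)]
  · set A := ∫ ω, |f ω| ^ s ∂μ with hAdef
    set b := A ^ (1 / s) with hbdef
    have hb0 : 0 < b := Real.rpow_pos_of_pos hA _
    have hbs : b ^ s = A := by
      rw [hbdef, ← Real.rpow_mul hA0, one_div_mul_cancel (ne_of_gt hs0), Real.rpow_one]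
    have hkey : ∀ ω, |f ω| ≤ b * ((|f ω| / b) ^ s / s + 1 / s') := by
      intro ω
      have hy := Real.young_inequality_of_nonneg
        (by positivity : (0:ℝ) ≤ |f ω| / b) (zero_le_one) hss
      rw [mul_one, Real.one_rpow] at hy
      have := mul_le_mul_of_nonneg_left hy hb0.le
      calc |f ω| = b * (|f ω| / b) := by field_simp
      _ ≤ b * ((|f ω| / b) ^ s / s + 1 / s') := this
    have hptw : ∀ ω, b * ((|f ω| / b) ^ s / s + 1 / s')
        = |f ω| ^ s * (b / (A * s)) + b * (1 / s') := by
      intro ω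
      rw [Real.div_rpow (abs_nonneg _) hb0.le, hbs]
      field_simp
    have hint : Integrable (fun ω => |f ω| ^ s * (b / (A * s)) + b * (1 / s')) μ :=
      (hfs.mul_const _).add (integrable_const _)
    have hmono : ∫ ω, |f ω| ∂μ ≤ ∫ ω, (|f ω| ^ s * (b / (A * s)) + b * (1 / s')) ∂μ := by
      refine integral_mono_of_nonneg (Filter.Eventually.of_forall fun ω => abs_nonneg _) hint
        (Filter.Eventually.of_forall fun ω => ?_)
      exact (hkey ω).trans_eq (hptw ω)
    have hcalc : ∫ ω, (|f ω| ^ s * (b / (A * s)) + b * (1 / s')) ∂μ = b := by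
      rw [integral_add (hfs.mul_const _) (integrable_const _), integral_mul_const,
        integral_const]
      simp only [measure_univ, ENNReal.toReal_one, probReal_univ, one_smul, smul_eq_mul]
      rw [← hAdef]
      have h1 : A * (b / (A * s)) = b * (1/s) := by
        field_simp
      rw [h1]
      have h3 : b * (1/s) + 1 * (b * (1/s')) = b * (s⁻¹ + s'⁻¹) := by ring
      rw [h3, hss.inv_add_inv_eq_one, mul_one]
    exact hmono.trans_eq hcalc

end DavMean

section Dav
variable {Ω : Type} {𝒜 ℬ : MeasurableSpace Ω} [m0 : MeasurableSpace Ω] {μ : Measure Ω}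

theorem dav_ind_int [IsProbabilityMeasure μ] (A : Set Ω) (hA : MeasurableSet A) :
    ∫ ω, A.indicator (1 : Ω → ℝ) ω ∂μ = (μ A).toReal := by
  have := integral_indicator_const (μ := μ) (1 : ℝ) hA
  rw [measureReal_def, smul_eq_mul, mul_one] at this
  exact this

theorem dav_cov4 [IsProbabilityMeasure μ] (h𝒜 : 𝒜 ≤ m0) (hℬ : ℬ ≤ m0) {α : ℝ}
    (hind : ∀ A B : Set Ω, MeasurableSet[𝒜] A → MeasurableSet[ℬ] B →
      |(μ (A ∩ B)).toReal - (μ A).toReal * (μ B).toReal| ≤ α)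
    {A1 A2 B1 B2 : Set Ω} (hA1 : MeasurableSet[𝒜] A1) (hA2 : MeasurableSet[𝒜] A2)
    (hB1 : MeasurableSet[ℬ] B1) (hB2 : MeasurableSet[ℬ] B2) :
    |(∫ ω, (A1.indicator 1 ω - A2.indicator 1 ω) * (B1.indicator 1 ω - B2.indicator 1 ω) ∂μ) -
      (∫ ω, (A1.indicator 1 ω - A2.indicator 1 ω : ℝ) ∂μ) *
        (∫ ω, (B1.indicator 1 ω - B2.indicator 1 ω : ℝ) ∂μ)| ≤ 4 * α := by
  have hA1' := h𝒜 _ hA1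
  have hA2' := h𝒜 _ hA2
  have hB1' := hℬ _ hB1
  have hB2' := hℬ _ hB2
  have hint : ∀ (s : Set Ω), MeasurableSet s → Integrable (s.indicator (1 : Ω → ℝ)) μ :=
    fun s hs => (integrable_const (1:ℝ)).indicator hs
  have hprod : ∀ ω, (A1.indicator 1 ω - A2.indicator 1 ω) * (B1.indicator 1 ω - B2.indicator 1 ω)
      = ((A1 ∩ B1).indicator (1 : Ω → ℝ) ω - (A1 ∩ B2).indicator 1 ω)
        - ((A2 ∩ B1).indicator 1 ω - (A2 ∩ B2).indicator 1 ω) := by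
    intro ω
    simp only [Set.inter_indicator_one, Pi.mul_apply]
    ring
  have hL : (∫ ω, (A1.indicator 1 ω - A2.indicator 1 ω) * (B1.indicator 1 ω - B2.indicator 1 ω) ∂μ)
      = ((μ (A1 ∩ B1)).toReal - (μ (A1 ∩ B2)).toReal)
        - ((μ (A2 ∩ B1)).toReal - (μ (A2 ∩ B2)).toReal) := by
    rw [integral_congr_ae (Filter.Eventually.of_forall hprod)]
    have isub : ∀ (f g : Ω → ℝ), Integrable f μ → Integrable g μ →
        ∫ ω, (f ω - g ω) ∂μ = (∫ ω, f ω ∂μ) - ∫ ω, g ω ∂μ := fun f g hf hg => integral_sub hf hg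
    have i1 : Integrable (fun ω => (A1 ∩ B1).indicator (1 : Ω → ℝ) ω
        - (A1 ∩ B2).indicator 1 ω) μ := (hint _ (hA1'.inter hB1')).sub (hint _ (hA1'.inter hB2'))
    have i2 : Integrable (fun ω => (A2 ∩ B1).indicator (1 : Ω → ℝ) ω
        - (A2 ∩ B2).indicator 1 ω) μ := (hint _ (hA2'.inter hB1')).sub (hint _ (hA2'.inter hB2'))
    rw [isub _ _ i1 i2,
      isub _ _ (hint _ (hA1'.inter hB1')) (hint _ (hA1'.inter hB2')),
      isub _ _ (hint _ (hA2'.inter hB1')) (hint _ (hA2'.inter hB2')),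
      dav_ind_int _ (hA1'.inter hB1'), dav_ind_int _ (hA1'.inter hB2'),
      dav_ind_int _ (hA2'.inter hB1'), dav_ind_int _ (hA2'.inter hB2')]
  have hMX : (∫ ω, (A1.indicator 1 ω - A2.indicator 1 ω : ℝ) ∂μ)
      = (μ A1).toReal - (μ A2).toReal := by
    have isub : ∀ (f g : Ω → ℝ), Integrable f μ → Integrable g μ →
        ∫ ω, (f ω - g ω) ∂μ = (∫ ω, f ω ∂μ) - ∫ ω, g ω ∂μ := fun f g hf hg => integral_sub hf hg
    rw [isub _ _ (hint _ hA1') (hint _ hA2'), dav_ind_int _ hA1', dav_ind_int _ hA2']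
  have hMY : (∫ ω, (B1.indicator 1 ω - B2.indicator 1 ω : ℝ) ∂μ)
      = (μ B1).toReal - (μ B2).toReal := by
    have isub : ∀ (f g : Ω → ℝ), Integrable f μ → Integrable g μ →
        ∫ ω, (f ω - g ω) ∂μ = (∫ ω, f ω ∂μ) - ∫ ω, g ω ∂μ := fun f g hf hg => integral_sub hf hg
    rw [isub _ _ (hint _ hB1') (hint _ hB2'), dav_ind_int _ hB1', dav_ind_int _ hB2']
  rw [hL, hMX, hMY]
  have h11 := hind A1 B1 hA1 hB1
  have h12 := hind A1 B2 hA1 hB2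
  have h21 := hind A2 B1 hA2 hB1
  have h22 := hind A2 B2 hA2 hB2
  rw [abs_le] at h11 h12 h21 h22 ⊢
  constructor <;> nlinarith [h11.1, h11.2, h12.1, h12.2, h21.1, h21.2, h22.1, h22.2]

/-- single-variable swap -/
theorem dav_swap1 [IsProbabilityMeasure μ] {W : Ω → ℝ} (hWm : Measurable W)
    {M : ℝ} (hWb : ∀ ω, |W ω| ≤ M) :
    ∫ ω, W ω ∂μ = ∫ t, (∫ ω, dav_G (W ω) t ∂μ) ∂(volume.restrict (Set.Ioo (0:ℝ) M)) := by
  haveI := dav_finrestrict M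
  have h1 : ∫ ω, W ω ∂μ
      = ∫ ω, (∫ t, dav_G (W ω) t ∂(volume.restrict (Set.Ioo (0:ℝ) M))) ∂μ :=
    integral_congr_ae (Filter.Eventually.of_forall fun ω => (dav_layer (hWb ω)).symm)
  have hint : Integrable (Function.uncurry fun (ω : Ω) (t : ℝ) => dav_G (W ω) t)
      (μ.prod (volume.restrict (Set.Ioo (0:ℝ) M))) := by
    refine Integrable.mono' (integrable_const 1)
      ((dav_G_meas (hWm.comp measurable_fst) measurable_snd).aestronglyMeasurable)
      (Filter.Eventually.of_forall fun q => ?_)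
    rw [Function.uncurry, Real.norm_eq_abs]
    exact dav_G_abs _ _
  rw [h1, integral_integral_swap hint]

/-- strong measurability of the inner average -/
theorem dav_phi_meas {W : Ω → ℝ} (hWm : Measurable W) [SFinite μ] :
    StronglyMeasurable fun t : ℝ => ∫ ω, dav_G (W ω) t ∂μ :=
  StronglyMeasurable.integral_prod_right
    ((dav_G_meas (hWm.comp measurable_snd) measurable_fst).stronglyMeasurable)

theorem dav_phi_bd [IsProbabilityMeasure μ] (W : Ω → ℝ) (t : ℝ) :
    ‖∫ ω, dav_G (W ω) t ∂μ‖ ≤ 1 := by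
  have h := norm_integral_le_of_norm_le_const (μ := μ) (C := 1)
    (f := fun ω => dav_G (W ω) t)
    (Filter.Eventually.of_forall fun ω => by rw [Real.norm_eq_abs]; exact dav_G_abs _ _)
  simpa using h

theorem dav_bounded [IsProbabilityMeasure μ] (h𝒜 : 𝒜 ≤ m0) (hℬ : ℬ ≤ m0) {α : ℝ}
    (hind : ∀ A B : Set Ω, MeasurableSet[𝒜] A → MeasurableSet[ℬ] B →
      |(μ (A ∩ B)).toReal - (μ A).toReal * (μ B).toReal| ≤ α)
    {U V : Ω → ℝ} (hU : Measurable[𝒜] U) (hV : Measurable[ℬ] V)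
    {M N : ℝ} (hM : 0 ≤ M) (hN : 0 ≤ N)
    (hUb : ∀ ω, |U ω| ≤ M) (hVb : ∀ ω, |V ω| ≤ N) :
    |(∫ ω, U ω * V ω ∂μ) - (∫ ω, U ω ∂μ) * ∫ ω, V ω ∂μ| ≤ 4 * (M * N) * α := by
  classical
  have hα0 : 0 ≤ α :=
    le_trans (abs_nonneg _) (hind ∅ ∅ (@MeasurableSet.empty _ 𝒜) (@MeasurableSet.empty _ ℬ))
  have hUm : Measurable U := fun s hs => h𝒜 _ (hU hs)
  have hVm : Measurable V := fun s hs => hℬ _ (hV hs)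
  haveI hfin1 := dav_finrestrict M
  haveI hfin2 := dav_finrestrict N
  have hKbd : ∀ (c d t u : ℝ), ‖dav_G c t * dav_G d u‖ ≤ 1 := by
    intro c d t u
    rw [Real.norm_eq_abs, abs_mul]
    exact mul_le_one₀ (dav_G_abs c t) (abs_nonneg _) (dav_G_abs d u)
  -- double integral representation of E[UV]
  have hA : ∫ ω, U ω * V ω ∂μ
      = ∫ p, (∫ ω, dav_G (U ω) p.1 * dav_G (V ω) p.2 ∂μ)
          ∂((volume.restrict (Set.Ioo (0:ℝ) M)).prod (volume.restrict (Set.Ioo (0:ℝ) N))) := by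
    have h1 : ∫ ω, U ω * V ω ∂μ
        = ∫ ω, (∫ p, dav_G (U ω) p.1 * dav_G (V ω) p.2
            ∂((volume.restrict (Set.Ioo (0:ℝ) M)).prod (volume.restrict (Set.Ioo (0:ℝ) N)))) ∂μ := by
      refine integral_congr_ae (Filter.Eventually.of_forall fun ω => ?_)
      beta_reduce
      rw [integral_prod_mul (μ := volume.restrict (Set.Ioo (0:ℝ) M))
        (ν := volume.restrict (Set.Ioo (0:ℝ) N)) (dav_G (U ω)) (dav_G (V ω)),
        dav_layer (hUb ω), dav_layer (hVb ω)]
    have hint : Integrable (Function.uncurry fun (ω : Ω) (p : ℝ × ℝ) =>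
        dav_G (U ω) p.1 * dav_G (V ω) p.2)
        (μ.prod ((volume.restrict (Set.Ioo (0:ℝ) M)).prod (volume.restrict (Set.Ioo (0:ℝ) N)))) := by
      have hKmeas' : Measurable fun q : Ω × (ℝ × ℝ) => dav_G (U q.1) q.2.1 * dav_G (V q.1) q.2.2 :=
        (dav_G_meas (hUm.comp measurable_fst) (measurable_fst.comp measurable_snd)).mul
          (dav_G_meas (hVm.comp measurable_fst) (measurable_snd.comp measurable_snd))
      exact Integrable.mono' (integrable_const 1) hKmeas'.aestronglyMeasurable
        (Filter.Eventually.of_forall fun q => hKbd _ _ _ _)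
    rw [h1, integral_integral_swap hint]
  -- product representation of E[U]E[V]
  have hD : (∫ ω, U ω ∂μ) * ∫ ω, V ω ∂μ
      = ∫ p, (∫ ω, dav_G (U ω) p.1 ∂μ) * (∫ ω, dav_G (V ω) p.2 ∂μ)
          ∂((volume.restrict (Set.Ioo (0:ℝ) M)).prod (volume.restrict (Set.Ioo (0:ℝ) N))) := by
    rw [dav_swap1 hUm hUb, dav_swap1 hVm hVb,
      ← integral_prod_mul (μ := volume.restrict (Set.Ioo (0:ℝ) M))
        (ν := volume.restrict (Set.Ioo (0:ℝ) N))
        (fun t => ∫ ω, dav_G (U ω) t ∂μ) (fun u => ∫ ω, dav_G (V ω) u ∂μ)]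
  -- pointwise bound
  have hE : ∀ p : ℝ × ℝ, |(∫ ω, dav_G (U ω) p.1 * dav_G (V ω) p.2 ∂μ)
      - (∫ ω, dav_G (U ω) p.1 ∂μ) * (∫ ω, dav_G (V ω) p.2 ∂μ)| ≤ 4 * α := by
    rintro ⟨t, u⟩
    have hGU : ∀ ω, dav_G (U ω) t
        = (U ⁻¹' Set.Ioi t).indicator 1 ω - (U ⁻¹' Set.Iio (-t)).indicator 1 ω := by
      intro ω; simp [dav_G, Set.indicator_apply, Set.mem_preimage]
    have hGV : ∀ ω, dav_G (V ω) u
        = (V ⁻¹' Set.Ioi u).indicator 1 ω - (V ⁻¹' Set.Iio (-u)).indicator 1 ω := by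
      intro ω; simp [dav_G, Set.indicator_apply, Set.mem_preimage]
    have e1 : (∫ ω, dav_G (U ω) t * dav_G (V ω) u ∂μ)
        = ∫ ω, ((U ⁻¹' Set.Ioi t).indicator 1 ω - (U ⁻¹' Set.Iio (-t)).indicator 1 ω)
        * ((V ⁻¹' Set.Ioi u).indicator 1 ω - (V ⁻¹' Set.Iio (-u)).indicator 1 ω) ∂μ := by
      refine integral_congr_ae (Filter.Eventually.of_forall fun ω => ?_)
      beta_reduce
      rw [hGU ω, hGV ω]
    have e2 : (∫ ω, dav_G (U ω) t ∂μ) = ∫ ω, ((U ⁻¹' Set.Ioi t).indicator 1 ω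
        - (U ⁻¹' Set.Iio (-t)).indicator 1 ω : ℝ) ∂μ :=
      integral_congr_ae (Filter.Eventually.of_forall fun ω => hGU ω)
    have e3 : (∫ ω, dav_G (V ω) u ∂μ) = ∫ ω, ((V ⁻¹' Set.Ioi u).indicator 1 ω
        - (V ⁻¹' Set.Iio (-u)).indicator 1 ω : ℝ) ∂μ :=
      integral_congr_ae (Filter.Eventually.of_forall fun ω => hGV ω)
    rw [e1, e2, e3]
    exact dav_cov4 h𝒜 hℬ hind (hU measurableSet_Ioi) (hU measurableSet_Iio)
      (hV measurableSet_Ioi) (hV measurableSet_Iio)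
  -- integrability over the rectangle
  have hΦint : Integrable (fun p : ℝ × ℝ => ∫ ω, dav_G (U ω) p.1 * dav_G (V ω) p.2 ∂μ)
      ((volume.restrict (Set.Ioo (0:ℝ) M)).prod (volume.restrict (Set.Ioo (0:ℝ) N))) := by
    have hKmeas : Measurable fun q : (ℝ × ℝ) × Ω => dav_G (U q.2) q.1.1 * dav_G (V q.2) q.1.2 :=
      (dav_G_meas (hUm.comp measurable_snd) (measurable_fst.comp measurable_fst)).mul
        (dav_G_meas (hVm.comp measurable_snd) (measurable_snd.comp measurable_fst))
    have hm : StronglyMeasurable fun p : ℝ × ℝ => ∫ ω, dav_G (U ω) p.1 * dav_G (V ω) p.2 ∂μ :=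
      StronglyMeasurable.integral_prod_right (hKmeas.stronglyMeasurable)
    refine Integrable.mono' (integrable_const 1) hm.aestronglyMeasurable
      (Filter.Eventually.of_forall fun p => ?_)
    have h := norm_integral_le_of_norm_le_const (μ := μ) (C := 1)
      (f := fun ω => dav_G (U ω) p.1 * dav_G (V ω) p.2)
      (Filter.Eventually.of_forall fun ω => hKbd _ _ _ _)
    simpa using h
  have hφψint : Integrable (fun p : ℝ × ℝ => (∫ ω, dav_G (U ω) p.1 ∂μ) * ∫ ω, dav_G (V ω) p.2 ∂μ)
      ((volume.restrict (Set.Ioo (0:ℝ) M)).prod (volume.restrict (Set.Ioo (0:ℝ) N))) := by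
    refine Integrable.mono' (integrable_const 1)
      ((((dav_phi_meas hUm).comp_measurable measurable_fst).mul
        ((dav_phi_meas hVm).comp_measurable measurable_snd)).aestronglyMeasurable)
      (Filter.Eventually.of_forall fun p => ?_)
    rw [Real.norm_eq_abs, abs_mul]
    exact mul_le_one₀ (by rw [← Real.norm_eq_abs]; exact dav_phi_bd U p.1) (abs_nonneg _)
      (by rw [← Real.norm_eq_abs]; exact dav_phi_bd V p.2)
  -- assemble
  have hkey : (∫ ω, U ω * V ω ∂μ) - (∫ ω, U ω ∂μ) * ∫ ω, V ω ∂μ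
      = ∫ p, ((∫ ω, dav_G (U ω) p.1 * dav_G (V ω) p.2 ∂μ)
          - (∫ ω, dav_G (U ω) p.1 ∂μ) * (∫ ω, dav_G (V ω) p.2 ∂μ))
          ∂((volume.restrict (Set.Ioo (0:ℝ) M)).prod (volume.restrict (Set.Ioo (0:ℝ) N))) := by
    rw [hA, hD, integral_sub hΦint hφψint]
  rw [hkey]
  have hρuniv : (((volume.restrict (Set.Ioo (0:ℝ) M)).prod
      (volume.restrict (Set.Ioo (0:ℝ) N))) Set.univ).toReal = M * N := by
    rw [← Set.univ_prod_univ, Measure.prod_prod, Measure.restrict_apply_univ,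
      Measure.restrict_apply_univ, Real.volume_Ioo, Real.volume_Ioo,
      ← ENNReal.ofReal_mul (by linarith)]
    rw [ENNReal.toReal_ofReal (by nlinarith)]
    ring_nf
  have hfinal := norm_integral_le_of_norm_le_const
    (μ := (volume.restrict (Set.Ioo (0:ℝ) M)).prod (volume.restrict (Set.Ioo (0:ℝ) N)))
    (C := 4 * α)
    (f := fun p : ℝ × ℝ => (∫ ω, dav_G (U ω) p.1 * dav_G (V ω) p.2 ∂μ)
      - (∫ ω, dav_G (U ω) p.1 ∂μ) * (∫ ω, dav_G (V ω) p.2 ∂μ))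
    (Filter.Eventually.of_forall fun p => by rw [Real.norm_eq_abs]; exact hE p)
  rw [Real.norm_eq_abs, measureReal_def, hρuniv] at hfinal
  calc _ ≤ 4 * α * (M * N) := hfinal
  _ = 4 * (M * N) * α := by ring

theorem dav_core [IsProbabilityMeasure μ] (h𝒜 : 𝒜 ≤ m0) (hℬ : ℬ ≤ m0) {α : ℝ}
    (hα : 0 < α) (hα1 : α ≤ 1)
    (hind : ∀ A B : Set Ω, MeasurableSet[𝒜] A → MeasurableSet[ℬ] B →
      |(μ (A ∩ B)).toReal - (μ A).toReal * (μ B).toReal| ≤ α)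
    {r s h : ℝ} (hr : 1 < r) (hs : 1 < s) (hh : 1 < h) (hrsh : 1/r + 1/s + 1/h = 1)
    {X Y : Ω → ℝ} (hX : Measurable[𝒜] X) (hY : Measurable[ℬ] Y)
    (hXr : Integrable (fun ω => |X ω| ^ r) μ) (hYs : Integrable (fun ω => |Y ω| ^ s) μ)
    (hAX : 0 < ∫ ω, |X ω| ^ r ∂μ) (hAY : 0 < ∫ ω, |Y ω| ^ s ∂μ) :
    |(∫ ω, X ω * Y ω ∂μ) - (∫ ω, X ω ∂μ) * ∫ ω, Y ω ∂μ|
      ≤ 10 * (∫ ω, |X ω| ^ r ∂μ) ^ (1/r) * (∫ ω, |Y ω| ^ s ∂μ) ^ (1/s) * α ^ (1/h) := by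
  have hr0 : (0:ℝ) < r := lt_trans one_pos hr
  have hs0 : (0:ℝ) < s := lt_trans one_pos hs
  have hh0 : (0:ℝ) < h := lt_trans one_pos hh
  have habs2 : ∀ u v : ℝ, |u - v| ≤ |u| + |v| := fun u v => by
    rw [sub_eq_add_neg]
    exact (abs_add_le _ _).trans_eq (by rw [abs_neg])
  -- conjugate exponents
  have hconj : r.HolderConjugate (r / (r - 1)) := by
    rw [Real.holderConjugate_iff]
    constructor
    · exact hr
    · rw [inv_div]
      field_simp
      ring
  have hsconj : s.HolderConjugate (s / (s - 1)) := by
    rw [Real.holderConjugate_iff]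
    constructor
    · exact hs
    · rw [inv_div]
      field_simp
      ring
  have hr's : r / (r - 1) ≤ s := by
    rw [div_le_iff₀ (by linarith : (0:ℝ) < r - 1)]
    have h1 : 1/r + 1/s ≤ 1 := by
      have : 0 < 1/h := by positivity
      linarith
    have h2 : r * s * (1/r + 1/s) = s + r := by field_simp
    have h3 : r * s * (1/r + 1/s) ≤ r * s := by
      nlinarith [mul_pos hr0 hs0]
    nlinarith
  -- measurability
  have hXm : Measurable X := fun t ht => h𝒜 _ (hX ht)
  have hYm : Measurable Y := fun t ht => hℬ _ (hY ht)
  -- names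
  set AX := ∫ ω, |X ω| ^ r ∂μ with hAXdef
  set AY := ∫ ω, |Y ω| ^ s ∂μ with hAYdef
  set a := AX ^ (1/r) with hadef
  set b := AY ^ (1/s) with hbdef
  set Z := α ^ (1/h) with hZdef
  set M := a * α ^ (-(1/r)) with hMdef
  set N := b * α ^ (-(1/s)) with hNdef
  have ha : 0 < a := Real.rpow_pos_of_pos hAX _
  have hb : 0 < b := Real.rpow_pos_of_pos hAY _
  have hZ : 0 < Z := Real.rpow_pos_of_pos hα _
  have hM : 0 < M := mul_pos ha (Real.rpow_pos_of_pos hα _)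
  have hN : 0 < N := mul_pos hb (Real.rpow_pos_of_pos hα _)
  -- rpow identities
  have har : a ^ r = AX := by
    rw [hadef, ← Real.rpow_mul hAX.le, one_div_mul_cancel (ne_of_gt hr0), Real.rpow_one]
  have hbs : b ^ s = AY := by
    rw [hbdef, ← Real.rpow_mul hAY.le, one_div_mul_cancel (ne_of_gt hs0), Real.rpow_one]
  have hMr : M ^ r = AX * α⁻¹ := by
    rw [hMdef, Real.mul_rpow ha.le (Real.rpow_nonneg hα.le _), har,
      ← Real.rpow_mul hα.le, show -(1/r) * r = -1 by field_simp, Real.rpow_neg_one]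
  have hNs : N ^ s = AY * α⁻¹ := by
    rw [hNdef, Real.mul_rpow hb.le (Real.rpow_nonneg hα.le _), hbs,
      ← Real.rpow_mul hα.le, show -(1/s) * s = -1 by field_simp, Real.rpow_neg_one]
  have hMtail : AX * M ^ (1 - r) = a * α ^ ((r-1)/r) := by
    rw [hMdef, Real.mul_rpow ha.le (Real.rpow_nonneg hα.le _),
      ← Real.rpow_mul hα.le, show -(1/r) * (1 - r) = (r-1)/r by field_simp; ring, ← har,
      show a ^ r * (a ^ (1-r) * α ^ ((r-1)/r)) = (a ^ r * a ^ (1-r)) * α ^ ((r-1)/r) by ring,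
      ← Real.rpow_add ha, show r + (1 - r) = 1 by ring, Real.rpow_one]
  have hNtail : AY * N ^ (1 - s) = b * α ^ ((s-1)/s) := by
    rw [hNdef, Real.mul_rpow hb.le (Real.rpow_nonneg hα.le _),
      ← Real.rpow_mul hα.le, show -(1/s) * (1 - s) = (s-1)/s by field_simp; ring, ← hbs,
      show b ^ s * (b ^ (1-s) * α ^ ((s-1)/s)) = (b ^ s * b ^ (1-s)) * α ^ ((s-1)/s) by ring,
      ← Real.rpow_add hb, show s + (1 - s) = 1 by ring, Real.rpow_one]
  have hMNα : M * N * α = a * b * Z := by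
    have h1 : α ^ (-(1/r)) * α ^ (-(1/s)) * α = α ^ (1/h) := by
      nth_rewrite 3 [show α = α ^ (1:ℝ) by rw [Real.rpow_one]]
      rw [← Real.rpow_add hα, ← Real.rpow_add hα]
      congr 1
      linarith
    calc M * N * α = a * b * (α ^ (-(1/r)) * α ^ (-(1/s)) * α) := by
          rw [hMdef, hNdef]; ring
    _ = a * b * Z := by rw [h1, hZdef]
  have hfrac_r : (r-1)/r = 1 - 1/r := by field_simp
  have hfrac_s : (s-1)/s = 1 - 1/s := by field_simp
  have hNe1 : N * (a * α ^ ((r-1)/r)) = a * b * Z := by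
    have h1 : α ^ (-(1/s)) * α ^ ((r-1)/r) = α ^ (1/h) := by
      rw [← Real.rpow_add hα]
      congr 1
      rw [hfrac_r]; linarith
    calc N * (a * α ^ ((r-1)/r)) = a * b * (α ^ (-(1/s)) * α ^ ((r-1)/r)) := by
          rw [hNdef]; ring
    _ = a * b * Z := by rw [h1, hZdef]
  have hMe2 : M * (b * α ^ ((s-1)/s)) = a * b * Z := by
    have h1 : α ^ (-(1/r)) * α ^ ((s-1)/s) = α ^ (1/h) := by
      rw [← Real.rpow_add hα]
      congr 1
      rw [hfrac_s]; linarith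
    calc M * (b * α ^ ((s-1)/s)) = a * b * (α ^ (-(1/r)) * α ^ ((s-1)/s)) := by
          rw [hMdef]; ring
    _ = a * b * Z := by rw [h1, hZdef]
  have hq : a * α ^ ((r-1)/r) * b ≤ a * b * Z := by
    have h1 : α ^ ((r-1)/r) ≤ Z := by
      rw [hZdef]
      apply Real.rpow_le_rpow_of_exponent_ge hα hα1
      rw [hfrac_r]
      have : 0 < 1/s := by positivity
      linarith
    calc a * α ^ ((r-1)/r) * b = (a * b) * α ^ ((r-1)/r) := by ring
    _ ≤ (a * b) * Z := mul_le_mul_of_nonneg_left h1 (by positivity)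
    _ = a * b * Z := by ring
  -- clipped functions
  set XM := fun ω => dav_clip (X ω) M with hXMdef
  set YN := fun ω => dav_clip (Y ω) N with hYNdef
  have hXM𝒜 : Measurable[𝒜] XM := by
    have : XM = fun ω => max (min (X ω) M) (-M) := rfl
    rw [this]
    exact Measurable.max (Measurable.min hX measurable_const) measurable_const
  have hYNℬ : Measurable[ℬ] YN := by
    have : YN = fun ω => max (min (Y ω) N) (-N) := rfl
    rw [this]
    exact Measurable.max (Measurable.min hY measurable_const) measurable_const
  have hXMm : Measurable XM := fun t ht => h𝒜 _ (hXM𝒜 ht)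
  have hYNm : Measurable YN := fun t ht => hℬ _ (hYNℬ ht)
  have hXMb : ∀ ω, |XM ω| ≤ M := fun ω => dav_clip_abs hM.le (X ω)
  have hYNb : ∀ ω, |YN ω| ≤ N := fun ω => dav_clip_abs hN.le (Y ω)
  -- integrability
  have hXint : Integrable X μ := by
    refine Integrable.mono' (hXr.add (integrable_const 1)) hXm.aestronglyMeasurable
      (Filter.Eventually.of_forall fun ω => ?_)
    rw [Real.norm_eq_abs]
    exact dav_abs_le_rpow hr.le _
  have hYint : Integrable Y μ := by
    refine Integrable.mono' (hYs.add (integrable_const 1)) hYm.aestronglyMeasurable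
      (Filter.Eventually.of_forall fun ω => ?_)
    rw [Real.norm_eq_abs]
    exact dav_abs_le_rpow hs.le _
  have hXMint : Integrable XM μ := by
    refine Integrable.mono' (integrable_const M) hXMm.aestronglyMeasurable
      (Filter.Eventually.of_forall fun ω => ?_)
    rw [Real.norm_eq_abs]; exact hXMb ω
  have hYNint : Integrable YN μ := by
    refine Integrable.mono' (integrable_const N) hYNm.aestronglyMeasurable
      (Filter.Eventually.of_forall fun ω => ?_)
    rw [Real.norm_eq_abs]; exact hYNb ω
  have hXYint : Integrable (fun ω => X ω * Y ω) μ := by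
    refine Integrable.mono' ((hXr.add hYs).add (integrable_const 1))
      (hXm.mul hYm).aestronglyMeasurable (Filter.Eventually.of_forall fun ω => ?_)
    rw [Real.norm_eq_abs]
    have := dav_mul_abs_le hconj hr's (X ω) (Y ω)
    simpa [add_assoc] using this
  have hXMYint : Integrable (fun ω => XM ω * Y ω) μ := by
    refine Integrable.mono' ((hYint.abs).const_mul M)
      (hXMm.mul hYm).aestronglyMeasurable (Filter.Eventually.of_forall fun ω => ?_)
    rw [Real.norm_eq_abs, abs_mul]
    exact mul_le_mul_of_nonneg_right (hXMb ω) (abs_nonneg _)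
  have hXMYNint : Integrable (fun ω => XM ω * YN ω) μ := by
    refine Integrable.mono' (integrable_const (M * N))
      (hXMm.mul hYNm).aestronglyMeasurable (Filter.Eventually.of_forall fun ω => ?_)
    rw [Real.norm_eq_abs, abs_mul]
    exact mul_le_mul (hXMb ω) (hYNb ω) (abs_nonneg _) hM.le
  have hXclipint : Integrable (fun ω => |X ω - XM ω|) μ := (hXint.sub hXMint).abs
  have hYclipint : Integrable (fun ω => |Y ω - YN ω|) μ := (hYint.sub hYNint).abs
  -- decomposition of integrals
  have hPQ : ∫ ω, (X ω - XM ω) * Y ω ∂μ = (∫ ω, X ω * Y ω ∂μ) - ∫ ω, XM ω * Y ω ∂μ := by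
    rw [← integral_sub hXYint hXMYint]
    exact integral_congr_ae (Filter.Eventually.of_forall fun ω => by ring)
  have hQR : ∫ ω, XM ω * (Y ω - YN ω) ∂μ = (∫ ω, XM ω * Y ω ∂μ) - ∫ ω, XM ω * YN ω ∂μ := by
    rw [← integral_sub hXMYint hXMYNint]
    exact integral_congr_ae (Filter.Eventually.of_forall fun ω => by ring)
  have hxx : ∫ ω, (X ω - XM ω) ∂μ = (∫ ω, X ω ∂μ) - ∫ ω, XM ω ∂μ := integral_sub hXint hXMint
  have hyy : ∫ ω, (Y ω - YN ω) ∂μ = (∫ ω, Y ω ∂μ) - ∫ ω, YN ω ∂μ := integral_sub hYint hYNint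
  -- term 1 : bounded covariance
  have hT1 : |(∫ ω, XM ω * YN ω ∂μ) - (∫ ω, XM ω ∂μ) * ∫ ω, YN ω ∂μ| ≤ 4 * (a * b * Z) := by
    have := dav_bounded h𝒜 hℬ hind hXM𝒜 hYNℬ hM.le hN.le hXMb hYNb
    calc |(∫ ω, XM ω * YN ω ∂μ) - (∫ ω, XM ω ∂μ) * ∫ ω, YN ω ∂μ| ≤ 4 * (M * N) * α := this
    _ = 4 * (a * b * Z) := by rw [← hMNα]; ring
  -- tail expectations
  have hEX1 : ∫ ω, |X ω - XM ω| ∂μ ≤ a * α ^ ((r-1)/r) := by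
    have h1 : ∫ ω, |X ω - XM ω| ∂μ ≤ ∫ ω, |X ω| ^ r * M ^ (1-r) ∂μ := by
      refine integral_mono_of_nonneg (Filter.Eventually.of_forall fun ω => abs_nonneg _)
        (hXr.mul_const _) (Filter.Eventually.of_forall fun ω => dav_tail_bound hM hr.le (X ω))
    rwa [integral_mul_const, ← hAXdef, hMtail] at h1
  have hEY2 : ∫ ω, |Y ω - YN ω| ∂μ ≤ b * α ^ ((s-1)/s) := by
    have h1 : ∫ ω, |Y ω - YN ω| ∂μ ≤ ∫ ω, |Y ω| ^ s * N ^ (1-s) ∂μ := by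
      refine integral_mono_of_nonneg (Filter.Eventually.of_forall fun ω => abs_nonneg _)
        (hYs.mul_const _) (Filter.Eventually.of_forall fun ω => dav_tail_bound hN hs.le (Y ω))
    rwa [integral_mul_const, ← hAYdef, hNtail] at h1
  have hEY : ∫ ω, |Y ω| ∂μ ≤ b := dav_young_mean hsconj hYm.aestronglyMeasurable hYs
  -- product tail bound
  have hptw : ∀ ω, |X ω - XM ω| * |Y ω - YN ω|
      ≤ M * N * ((|X ω| / M) ^ r + (|Y ω| / N) ^ s) :=
    fun ω => dav_tail_prod hM hN hconj hr's (X ω) (Y ω)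
  have hg_eq : (fun ω => M * N * ((|X ω| / M) ^ r + (|Y ω| / N) ^ s))
      = fun ω => M * N * (|X ω| ^ r * (M ^ r)⁻¹ + |Y ω| ^ s * (N ^ s)⁻¹) := by
    funext ω
    rw [Real.div_rpow (abs_nonneg _) hM.le, Real.div_rpow (abs_nonneg _) hN.le,
      div_eq_mul_inv, div_eq_mul_inv]
  have hgint : Integrable (fun ω => M * N * ((|X ω| / M) ^ r + (|Y ω| / N) ^ s)) μ := by
    rw [hg_eq]
    exact ((hXr.mul_const _).add (hYs.mul_const _)).const_mul _
  have hProd : ∫ ω, |X ω - XM ω| * |Y ω - YN ω| ∂μ ≤ 2 * (a * b * Z) := by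
    have h1 : ∫ ω, |X ω - XM ω| * |Y ω - YN ω| ∂μ
        ≤ ∫ ω, M * N * ((|X ω| / M) ^ r + (|Y ω| / N) ^ s) ∂μ :=
      integral_mono_of_nonneg
        (Filter.Eventually.of_forall fun ω => mul_nonneg (abs_nonneg _) (abs_nonneg _))
        hgint (Filter.Eventually.of_forall hptw)
    have h2 : ∫ ω, M * N * ((|X ω| / M) ^ r + (|Y ω| / N) ^ s) ∂μ
        = M * N * (AX * (M ^ r)⁻¹ + AY * (N ^ s)⁻¹) := by
      rw [hg_eq, integral_const_mul, integral_add (hXr.mul_const _) (hYs.mul_const _),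
        integral_mul_const, integral_mul_const, ← hAXdef, ← hAYdef]
    have h3 : AX * (M ^ r)⁻¹ = α := by
      rw [hMr, mul_inv, inv_inv, ← mul_assoc, mul_inv_cancel₀ (ne_of_gt hAX), one_mul]
    have h4 : AY * (N ^ s)⁻¹ = α := by
      rw [hNs, mul_inv, inv_inv, ← mul_assoc, mul_inv_cancel₀ (ne_of_gt hAY), one_mul]
    have h5 : M * N * (AX * (M ^ r)⁻¹ + AY * (N ^ s)⁻¹) = 2 * (a * b * Z) := by
      rw [h3, h4, show M * N * (α + α) = 2 * (M * N * α) by ring, hMNα]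
    linarith [h1.trans_eq (h2.trans h5)]
  -- integrability of the product of tails
  have hprodint : Integrable (fun ω => |X ω - XM ω| * |Y ω - YN ω|) μ := by
    refine Integrable.mono' hgint
      (((hXm.sub hXMm).abs.mul ((hYm.sub hYNm).abs)).aestronglyMeasurable)
      (Filter.Eventually.of_forall fun ω => ?_)
    rw [Real.norm_eq_abs, abs_of_nonneg (mul_nonneg (abs_nonneg _) (abs_nonneg _))]
    exact hptw ω
  -- term 2 pieces
  have hT2a : ∫ ω, |X ω - XM ω| * |Y ω| ∂μ ≤ 3 * (a * b * Z) := by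
    have hptw2 : ∀ ω, |X ω - XM ω| * |Y ω|
        ≤ |X ω - XM ω| * |Y ω - YN ω| + N * |X ω - XM ω| := by
      intro ω
      have h1 : |Y ω| ≤ |Y ω - YN ω| + N := by
        calc |Y ω| = |(Y ω - YN ω) + YN ω| := by ring_nf
        _ ≤ |Y ω - YN ω| + |YN ω| := abs_add_le _ _
        _ ≤ |Y ω - YN ω| + N := by linarith [hYNb ω]
      calc |X ω - XM ω| * |Y ω| ≤ |X ω - XM ω| * (|Y ω - YN ω| + N) :=
        mul_le_mul_of_nonneg_left h1 (abs_nonneg _)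
      _ = |X ω - XM ω| * |Y ω - YN ω| + N * |X ω - XM ω| := by ring
    have hmidint : Integrable (fun ω => |X ω - XM ω| * |Y ω - YN ω| + N * |X ω - XM ω|) μ :=
      hprodint.add (hXclipint.const_mul N)
    have h1 : ∫ ω, |X ω - XM ω| * |Y ω| ∂μ
        ≤ ∫ ω, (|X ω - XM ω| * |Y ω - YN ω| + N * |X ω - XM ω|) ∂μ :=
      integral_mono_of_nonneg
        (Filter.Eventually.of_forall fun ω => mul_nonneg (abs_nonneg _) (abs_nonneg _))
        hmidint (Filter.Eventually.of_forall hptw2)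
    have h2 : ∫ ω, (|X ω - XM ω| * |Y ω - YN ω| + N * |X ω - XM ω|) ∂μ
        = (∫ ω, |X ω - XM ω| * |Y ω - YN ω| ∂μ) + N * ∫ ω, |X ω - XM ω| ∂μ := by
      rw [integral_add hprodint (hXclipint.const_mul N), integral_const_mul]
    have h3 : N * ∫ ω, |X ω - XM ω| ∂μ ≤ a * b * Z := by
      calc N * ∫ ω, |X ω - XM ω| ∂μ ≤ N * (a * α ^ ((r-1)/r)) :=
        mul_le_mul_of_nonneg_left hEX1 hN.le
      _ = a * b * Z := hNe1
    linarith [h1.trans_eq h2]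
  have hT2 : |((∫ ω, X ω * Y ω ∂μ) - ∫ ω, XM ω * Y ω ∂μ)
      - ((∫ ω, X ω ∂μ) - ∫ ω, XM ω ∂μ) * ∫ ω, Y ω ∂μ| ≤ 4 * (a * b * Z) := by
    have e1 : |(∫ ω, X ω * Y ω ∂μ) - ∫ ω, XM ω * Y ω ∂μ| ≤ 3 * (a * b * Z) := by
      rw [← hPQ]
      calc |∫ ω, (X ω - XM ω) * Y ω ∂μ| ≤ ∫ ω, |X ω - XM ω| * |Y ω| ∂μ := by
            simpa [Real.norm_eq_abs, abs_mul] using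
              norm_integral_le_integral_norm (fun ω => (X ω - XM ω) * Y ω) (μ := μ)
      _ ≤ 3 * (a * b * Z) := hT2a
    have e2 : |(∫ ω, X ω ∂μ) - ∫ ω, XM ω ∂μ| ≤ a * α ^ ((r-1)/r) := by
      rw [← hxx]
      calc |∫ ω, (X ω - XM ω) ∂μ| ≤ ∫ ω, |X ω - XM ω| ∂μ := by
            simpa [Real.norm_eq_abs] using
              norm_integral_le_integral_norm (fun ω => X ω - XM ω) (μ := μ)
      _ ≤ a * α ^ ((r-1)/r) := hEX1
    have e3 : |∫ ω, Y ω ∂μ| ≤ b := by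
      calc |∫ ω, Y ω ∂μ| ≤ ∫ ω, |Y ω| ∂μ := by
            simpa [Real.norm_eq_abs] using norm_integral_le_integral_norm Y (μ := μ)
      _ ≤ b := hEY
    have e4 : |((∫ ω, X ω ∂μ) - ∫ ω, XM ω ∂μ) * ∫ ω, Y ω ∂μ| ≤ a * α ^ ((r-1)/r) * b := by
      rw [abs_mul]
      exact mul_le_mul e2 e3 (abs_nonneg _) (by positivity)
    have e5 := habs2 ((∫ ω, X ω * Y ω ∂μ) - ∫ ω, XM ω * Y ω ∂μ)
      (((∫ ω, X ω ∂μ) - ∫ ω, XM ω ∂μ) * ∫ ω, Y ω ∂μ)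
    have e6 := hq
    linarith
  -- term 3
  have hT3 : |((∫ ω, XM ω * Y ω ∂μ) - ∫ ω, XM ω * YN ω ∂μ)
      - (∫ ω, XM ω ∂μ) * ((∫ ω, Y ω ∂μ) - ∫ ω, YN ω ∂μ)| ≤ 2 * (a * b * Z) := by
    have e0 : ∫ ω, |XM ω * (Y ω - YN ω)| ∂μ ≤ M * (b * α ^ ((s-1)/s)) := by
      have h1 : ∫ ω, |XM ω * (Y ω - YN ω)| ∂μ ≤ ∫ ω, M * |Y ω - YN ω| ∂μ := by
        refine integral_mono_of_nonneg (Filter.Eventually.of_forall fun ω => abs_nonneg _)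
          (hYclipint.const_mul M) (Filter.Eventually.of_forall fun ω => ?_)
        show |XM ω * (Y ω - YN ω)| ≤ M * |Y ω - YN ω|
        rw [abs_mul]
        exact mul_le_mul_of_nonneg_right (hXMb ω) (abs_nonneg _)
      have h2 : ∫ ω, M * |Y ω - YN ω| ∂μ = M * ∫ ω, |Y ω - YN ω| ∂μ := integral_const_mul _ _
      calc ∫ ω, |XM ω * (Y ω - YN ω)| ∂μ ≤ M * ∫ ω, |Y ω - YN ω| ∂μ := h1.trans_eq h2
      _ ≤ M * (b * α ^ ((s-1)/s)) := mul_le_mul_of_nonneg_left hEY2 hM.le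
    have e1 : |(∫ ω, XM ω * Y ω ∂μ) - ∫ ω, XM ω * YN ω ∂μ| ≤ M * (b * α ^ ((s-1)/s)) := by
      rw [← hQR]
      calc |∫ ω, XM ω * (Y ω - YN ω) ∂μ| ≤ ∫ ω, |XM ω * (Y ω - YN ω)| ∂μ :=
            norm_integral_le_integral_norm (fun ω => XM ω * (Y ω - YN ω)) (μ := μ)
      _ ≤ M * (b * α ^ ((s-1)/s)) := e0
    have e2 : |∫ ω, XM ω ∂μ| ≤ M := by
      have h1 : ∫ ω, |XM ω| ∂μ ≤ ∫ ω, (M : ℝ) ∂μ :=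
        integral_mono_of_nonneg (Filter.Eventually.of_forall fun ω => abs_nonneg _)
          (integrable_const M) (Filter.Eventually.of_forall fun ω => hXMb ω)
      have h2 : ∫ ω, (M : ℝ) ∂μ = M := by simp
      calc |∫ ω, XM ω ∂μ| ≤ ∫ ω, |XM ω| ∂μ := by
            simpa [Real.norm_eq_abs] using norm_integral_le_integral_norm XM (μ := μ)
      _ ≤ M := h1.trans_eq h2
    have e3 : |(∫ ω, Y ω ∂μ) - ∫ ω, YN ω ∂μ| ≤ b * α ^ ((s-1)/s) := by
      rw [← hyy]
      calc |∫ ω, (Y ω - YN ω) ∂μ| ≤ ∫ ω, |Y ω - YN ω| ∂μ := by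
            simpa [Real.norm_eq_abs] using
              norm_integral_le_integral_norm (fun ω => Y ω - YN ω) (μ := μ)
      _ ≤ b * α ^ ((s-1)/s) := hEY2
    have e4 : |(∫ ω, XM ω ∂μ) * ((∫ ω, Y ω ∂μ) - ∫ ω, YN ω ∂μ)| ≤ M * (b * α ^ ((s-1)/s)) := by
      rw [abs_mul]
      exact mul_le_mul e2 e3 (abs_nonneg _) hM.le
    have e5 := habs2 ((∫ ω, XM ω * Y ω ∂μ) - ∫ ω, XM ω * YN ω ∂μ)
      ((∫ ω, XM ω ∂μ) * ((∫ ω, Y ω ∂μ) - ∫ ω, YN ω ∂μ))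
    have e6 : M * (b * α ^ ((s-1)/s)) = a * b * Z := hMe2
    linarith
  -- assemble
  have hdecomp : (∫ ω, X ω * Y ω ∂μ) - (∫ ω, X ω ∂μ) * ∫ ω, Y ω ∂μ
      = ((∫ ω, XM ω * YN ω ∂μ) - (∫ ω, XM ω ∂μ) * ∫ ω, YN ω ∂μ)
        + (((∫ ω, X ω * Y ω ∂μ) - ∫ ω, XM ω * Y ω ∂μ)
          - ((∫ ω, X ω ∂μ) - ∫ ω, XM ω ∂μ) * ∫ ω, Y ω ∂μ)
        + (((∫ ω, XM ω * Y ω ∂μ) - ∫ ω, XM ω * YN ω ∂μ)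
          - (∫ ω, XM ω ∂μ) * ((∫ ω, Y ω ∂μ) - ∫ ω, YN ω ∂μ)) := by ring
  rw [hdecomp]
  have h6 := abs_add_le (((∫ ω, XM ω * YN ω ∂μ) - (∫ ω, XM ω ∂μ) * ∫ ω, YN ω ∂μ)
      + (((∫ ω, X ω * Y ω ∂μ) - ∫ ω, XM ω * Y ω ∂μ)
        - ((∫ ω, X ω ∂μ) - ∫ ω, XM ω ∂μ) * ∫ ω, Y ω ∂μ))
    (((∫ ω, XM ω * Y ω ∂μ) - ∫ ω, XM ω * YN ω ∂μ)
      - (∫ ω, XM ω ∂μ) * ((∫ ω, Y ω ∂μ) - ∫ ω, YN ω ∂μ))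
  have h7 := abs_add_le ((∫ ω, XM ω * YN ω ∂μ) - (∫ ω, XM ω ∂μ) * ∫ ω, YN ω ∂μ)
    (((∫ ω, X ω * Y ω ∂μ) - ∫ ω, XM ω * Y ω ∂μ)
      - ((∫ ω, X ω ∂μ) - ∫ ω, XM ω ∂μ) * ∫ ω, Y ω ∂μ)
  have hfin : 10 * AX ^ (1/r) * AY ^ (1/s) * α ^ (1/h) = 10 * (a * b * Z) := by
    rw [hadef, hbdef, hZdef]; ring
  rw [hfin]
  linarith

end Dav

/-- Davydov's covariance inequality:
`|E[XY] - E[X]E[Y]| ≤ C ‖X‖_r ‖Y‖_s α(𝒜,ℬ)^{1/h}` for a universal constant `C`. -/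
theorem stmt_15 :
    ∃ C : ℝ, 0 < C ∧
      ∀ (Ω : Type) (𝒜 ℬ : MeasurableSpace Ω) [m0 : MeasurableSpace Ω]
        (μ : Measure Ω), IsProbabilityMeasure μ → 𝒜 ≤ m0 → ℬ ≤ m0 →
      ∀ (r s h : ℝ), 1 ≤ r → 1 ≤ s → 1 ≤ h → 1 / r + 1 / s + 1 / h = 1 →
      ∀ (X Y : Ω → ℝ), Measurable[𝒜] X → Measurable[ℬ] Y →
        Integrable (fun ω => |X ω| ^ r) μ →
        Integrable (fun ω => |Y ω| ^ s) μ →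
        |(∫ ω, X ω * Y ω ∂μ) - (∫ ω, X ω ∂μ) * ∫ ω, Y ω ∂μ| ≤
          C * (∫ ω, |X ω| ^ r ∂μ) ^ (1 / r) * (∫ ω, |Y ω| ^ s ∂μ) ^ (1 / s) *
            (sSup {t : ℝ | ∃ A B : Set Ω, MeasurableSet[𝒜] A ∧ MeasurableSet[ℬ] B ∧
                t = |(μ (A ∩ B)).toReal - (μ A).toReal * (μ B).toReal|}) ^ (1 / h) := by
  refine ⟨10, by norm_num, ?_⟩
  intro Ω 𝒜 ℬ m0 μ hprob h𝒜 hℬ r s h hr hs hh hrsh X Y hX hY hXr hYs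
  haveI := hprob
  -- exponents are strictly greater than 1
  have hr0 : (0:ℝ) < r := lt_of_lt_of_le one_pos hr
  have hs0 : (0:ℝ) < s := lt_of_lt_of_le one_pos hs
  have hh0 : (0:ℝ) < h := lt_of_lt_of_le one_pos hh
  have h1r : 0 < 1/r := by positivity
  have h1s : 0 < 1/s := by positivity
  have h1h : 0 < 1/h := by positivity
  have hstrict : ∀ p q w : ℝ, 0 < p → 0 < q → 0 < w → 1/p + 1/q + 1/w = 1 → 1 < p := by
    intro p q w hp hq hw hpqw
    by_contra hc
    push_neg at hc
    have h2 : 1 ≤ 1/p := by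
      rw [le_div_iff₀ hp]; linarith
    have h3 : 0 < 1/q := by positivity
    have h4 : 0 < 1/w := by positivity
    linarith
  have hr1 : 1 < r := hstrict r s h hr0 hs0 hh0 hrsh
  have hs1 : 1 < s := hstrict s r h hs0 hr0 hh0 (by linarith)
  have hh1 : 1 < h := hstrict h r s hh0 hr0 hs0 (by linarith)
  -- the mixing coefficient
  set S : Set ℝ := {t : ℝ | ∃ A B : Set Ω, MeasurableSet[𝒜] A ∧ MeasurableSet[ℬ] B ∧
      t = |(μ (A ∩ B)).toReal - (μ A).toReal * (μ B).toReal|} with hSdef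
  have hS0 : (0:ℝ) ∈ S := by
    refine ⟨∅, ∅, @MeasurableSet.empty _ 𝒜, @MeasurableSet.empty _ ℬ, ?_⟩
    simp
  have hSbd : ∀ t ∈ S, t ≤ 1 := by
    rintro t ⟨A, B, hA, hB, rfl⟩
    have hle : ∀ s : Set Ω, (μ s).toReal ≤ 1 := by
      intro s
      have h1 : μ s ≤ 1 := prob_le_one
      calc (μ s).toReal ≤ (1 : ENNReal).toReal := ENNReal.toReal_mono ENNReal.one_ne_top h1
      _ = 1 := ENNReal.toReal_one
    have h1 := hle (A ∩ B)
    have h2 := hle A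
    have h3 := hle B
    have h4 : 0 ≤ (μ (A ∩ B)).toReal := ENNReal.toReal_nonneg
    have h5 : 0 ≤ (μ A).toReal := ENNReal.toReal_nonneg
    have h6 : 0 ≤ (μ B).toReal := ENNReal.toReal_nonneg
    rw [abs_le]
    constructor <;> nlinarith
  have hSbdd : BddAbove S := ⟨1, fun t ht => hSbd t ht⟩
  have hα0 : 0 ≤ sSup S := le_csSup hSbdd hS0
  have hα1 : sSup S ≤ 1 := csSup_le ⟨0, hS0⟩ hSbd
  have hind : ∀ A B : Set Ω, MeasurableSet[𝒜] A → MeasurableSet[ℬ] B →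
      |(μ (A ∩ B)).toReal - (μ A).toReal * (μ B).toReal| ≤ sSup S :=
    fun A B hA hB => le_csSup hSbdd ⟨A, B, hA, hB, rfl⟩
  have hXm : Measurable X := fun t ht => h𝒜 _ (hX ht)
  have hYm : Measurable Y := fun t ht => hℬ _ (hY ht)
  have hXnn : 0 ≤ ∫ ω, |X ω| ^ r ∂μ :=
    integral_nonneg fun ω => Real.rpow_nonneg (abs_nonneg _) r
  have hYnn : 0 ≤ ∫ ω, |Y ω| ^ s ∂μ :=
    integral_nonneg fun ω => Real.rpow_nonneg (abs_nonneg _) s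
  -- degenerate case : X = 0 a.e.
  rcases eq_or_lt_of_le hXnn with hAX | hAX
  · have hz : (fun ω => |X ω| ^ r) =ᵐ[μ] 0 :=
      (integral_eq_zero_iff_of_nonneg_ae
        (Filter.Eventually.of_forall fun ω => Real.rpow_nonneg (abs_nonneg _) r) hXr).mp hAX.symm
    have hz2 : X =ᵐ[μ] 0 := by
      filter_upwards [hz] with ω hω
      have h1 : |X ω| ^ r = 0 := hω
      have h2 := (Real.rpow_eq_zero_iff_of_nonneg (abs_nonneg (X ω))).mp h1
      simpa using h2.1
    have e1 : ∫ ω, X ω * Y ω ∂μ = 0 := by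
      apply integral_eq_zero_of_ae
      filter_upwards [hz2] with ω hω
      simp only [Pi.zero_apply] at hω ⊢
      rw [hω, zero_mul]
    have e2 : ∫ ω, X ω ∂μ = 0 := integral_eq_zero_of_ae hz2
    rw [e1, e2, ← hAX, Real.zero_rpow (ne_of_gt h1r)]
    simp
  -- degenerate case : Y = 0 a.e.
  rcases eq_or_lt_of_le hYnn with hAY | hAY
  · have hz : (fun ω => |Y ω| ^ s) =ᵐ[μ] 0 :=
      (integral_eq_zero_iff_of_nonneg_ae
        (Filter.Eventually.of_forall fun ω => Real.rpow_nonneg (abs_nonneg _) s) hYs).mp hAY.symm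
    have hz2 : Y =ᵐ[μ] 0 := by
      filter_upwards [hz] with ω hω
      have h1 : |Y ω| ^ s = 0 := hω
      have h2 := (Real.rpow_eq_zero_iff_of_nonneg (abs_nonneg (Y ω))).mp h1
      simpa using h2.1
    have e1 : ∫ ω, X ω * Y ω ∂μ = 0 := by
      apply integral_eq_zero_of_ae
      filter_upwards [hz2] with ω hω
      simp only [Pi.zero_apply] at hω ⊢
      rw [hω, mul_zero]
    have e2 : ∫ ω, Y ω ∂μ = 0 := integral_eq_zero_of_ae hz2
    rw [e1, e2, ← hAY, Real.zero_rpow (ne_of_gt h1s)]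
    simp
  -- independent case : sSup S = 0
  rcases eq_or_lt_of_le hα0 with hα | hα
  · have hXint : Integrable X μ := by
      refine Integrable.mono' (hXr.add (integrable_const 1)) hXm.aestronglyMeasurable
        (Filter.Eventually.of_forall fun ω => ?_)
      rw [Real.norm_eq_abs]
      exact dav_abs_le_rpow hr _
    have hYint : Integrable Y μ := by
      refine Integrable.mono' (hYs.add (integrable_const 1)) hYm.aestronglyMeasurable
        (Filter.Eventually.of_forall fun ω => ?_)
      rw [Real.norm_eq_abs]
      exact dav_abs_le_rpow hs _
    have hIF : ProbabilityTheory.IndepFun X Y μ := by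
      rw [ProbabilityTheory.indepFun_iff_measure_inter_preimage_eq_mul]
      intro s t hsm htm
      have h0 := hind _ _ (hX hsm) (hY htm)
      rw [← hα] at h0
      have h1 : |(μ (X ⁻¹' s ∩ Y ⁻¹' t)).toReal
          - (μ (X ⁻¹' s)).toReal * (μ (Y ⁻¹' t)).toReal| = 0 :=
        le_antisymm h0 (abs_nonneg _)
      have h2 : (μ (X ⁻¹' s ∩ Y ⁻¹' t)).toReal = (μ (X ⁻¹' s) * μ (Y ⁻¹' t)).toReal := by
        rw [ENNReal.toReal_mul]
        have := abs_eq_zero.mp h1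
        linarith
      exact (ENNReal.toReal_eq_toReal_iff' (measure_ne_top μ _)
        (ENNReal.mul_ne_top (measure_ne_top μ _) (measure_ne_top μ _))).mp h2
    have hmul : ∫ ω, X ω * Y ω ∂μ = (∫ ω, X ω ∂μ) * ∫ ω, Y ω ∂μ :=
      hIF.integral_mul_eq_mul_integral hXint.aestronglyMeasurable hYint.aestronglyMeasurable
    rw [hmul, sub_self, ← hα, Real.zero_rpow (ne_of_gt h1h)]
    simp
  -- main case
  · exact dav_core h𝒜 hℬ hα hα1 hind hr1 hs1 hh1 hrsh hX hY hXr hYs hAX hAY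
end
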